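/- arXiv:math/9405213 — 3 statements merged into one kernel-verified Lean document; each statement's English description precedes it below -/
import Mathlib

section
/- Let μ be a positive Borel measure on ℝ with infinite support and finite moments of all orders, let (p_n)_{n≥0} be polynomials with real coefficients satisfying ∫_ℝ p_n(x) p_m(x) dμ(x) = ζ_n δ_{m,n} with ζ_n > 0, let (c_n) be nonzero complex numbers, and let ρ ∈ (0,∞] be the radius of convergence of the power series Σ_{n=0}^∞ (√ζ_n / c_n) z^n. Then: (a) there is a μ-null set N ⊆ ℝ such that for every x ∈ ℝ \ N and every t with |t| < ρ the series Σ_{n=0}^∞ p_n(x) t^n / c_n converges absolutely; (b) for each t with |t| < ρ the series converges in L²(μ) to a function G(·,t); and (c) for all t₁, t₂ with |t₁|, |t₂| < ρ one has ∫_ℝ G(x,t₁) G(x,t₂) dμ(x) = Σ_{n=0}^∞ ζ_n (t₁ t₂)^n / c_n². -/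
open MeasureTheory Complex Filter Finset
open scoped ENNReal NNReal

lemma aux_poly_int {μ : Measure ℝ} (hmom : ∀ n : ℕ, Integrable (fun x : ℝ => x ^ n) μ)
    (q : Polynomial ℝ) : Integrable (fun x => q.eval x) μ := by
  have : (fun x => q.eval x) = fun x => ∑ i ∈ Finset.range (q.natDegree + 1), q.coeff i * x ^ i := by
    funext x; rw [Polynomial.eval_eq_sum_range]
  rw [this]
  exact integrable_finset_sum _ (fun i _ => (hmom i).const_mul _)

lemma aux_summable_mul_nonneg {u v : ℕ → ℝ} (hu : Summable u) (hv : Summable v)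
    (hu0 : ∀ n, 0 ≤ u n) (hv0 : ∀ n, 0 ≤ v n) : Summable (fun n => u n * v n) := by
  refine Summable.of_nonneg_of_le (fun n => mul_nonneg (hu0 n) (hv0 n)) (fun n => ?_)
    (hu.mul_left (∑' m, v m))
  calc u n * v n ≤ u n * ∑' m, v m :=
        mul_le_mul_of_nonneg_left (Summable.le_tsum hv n fun j _ => hv0 j) (hu0 n)
  _ = (∑' m, v m) * u n := mul_comm _ _

lemma aux_key_lintegral {μ : Measure ℝ}
    (hmom : ∀ n : ℕ, Integrable (fun x : ℝ => x ^ n) μ)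
    (p : ℕ → Polynomial ℝ) (ζ : ℕ → ℝ) (hζ : ∀ n, 0 < ζ n)
    (hon : ∀ n, ∫ x, (p n).eval x * (p n).eval x ∂μ = ζ n)
    (w : ℕ → ℝ) (hw0 : ∀ n, 0 ≤ w n)
    (hw : Summable (fun n => Real.sqrt (ζ n) * w n)) :
    ∫⁻ x, (∑' n, ENNReal.ofReal (|(p n).eval x| * w n)) ^ 2 ∂μ
      ≤ (ENNReal.ofReal (∑' n, Real.sqrt (ζ n) * w n)) ^ 2 := by
  set F : ℕ → ℝ → ℝ≥0∞ := fun n x => ENNReal.ofReal (|(p n).eval x| * w n) with hF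
  have hFmeas : ∀ n, Measurable (F n) := fun n =>
    ((p n).continuous.abs.measurable.mul_const _).ennreal_ofReal
  have hconj : Real.HolderConjugate 2 2 := Real.HolderConjugate.two_two
  have hL2 : ∀ n, ∫⁻ x, F n x ^ (2:ℝ) ∂μ = ENNReal.ofReal ((Real.sqrt (ζ n) * w n) ^ 2) := by
    intro n
    have hint : Integrable (fun x => ((p n).eval x * (p n).eval x) * (w n * w n)) μ := by
      have := (aux_poly_int hmom (p n * p n)).mul_const (w n * w n)
      simpa [Polynomial.eval_mul] using this
    have h1 : ∀ x : ℝ, F n x ^ (2:ℝ) = ENNReal.ofReal (((p n).eval x * (p n).eval x) * (w n * w n)) := by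
      intro x
      rw [hF]
      rw [ENNReal.ofReal_rpow_of_nonneg (mul_nonneg (abs_nonneg _) (hw0 n)) (by norm_num)]
      congr 1
      rw [show ((2:ℝ)) = ((2:ℕ):ℝ) by norm_num, Real.rpow_natCast]
      rw [mul_pow, _root_.sq_abs]; ring
    simp only [h1]
    rw [← ofReal_integral_eq_lintegral_ofReal hint]
    · rw [integral_mul_const, hon n]
      congr 1
      rw [mul_pow, Real.sq_sqrt (hζ n).le]; ring
    · filter_upwards with x
      exact mul_nonneg (mul_self_nonneg _) (mul_self_nonneg _)
  have hI : ∀ n, (∫⁻ x, F n x ^ (2:ℝ) ∂μ) ^ (1/2:ℝ) = ENNReal.ofReal (Real.sqrt (ζ n) * w n) := by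
    intro n
    rw [hL2 n, ENNReal.ofReal_rpow_of_nonneg (sq_nonneg _) (by norm_num)]
    congr 1
    rw [← Real.sqrt_eq_rpow, Real.sqrt_sq (mul_nonneg (Real.sqrt_nonneg _) (hw0 n))]
  have holder : ∀ n m, ∫⁻ x, F n x * F m x ∂μ ≤
      ENNReal.ofReal (Real.sqrt (ζ n) * w n) * ENNReal.ofReal (Real.sqrt (ζ m) * w m) := by
    intro n m
    rw [← hI n, ← hI m]
    exact ENNReal.lintegral_mul_le_Lp_mul_Lq μ hconj (hFmeas n).aemeasurable (hFmeas m).aemeasurable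
  calc ∫⁻ x, (∑' n, F n x) ^ 2 ∂μ
      = ∫⁻ x, ∑' (n : ℕ) (m : ℕ), F n x * F m x ∂μ := by
        congr 1; funext x
        rw [pow_two, ← ENNReal.tsum_mul_right]
        congr 1; funext n
        rw [← ENNReal.tsum_mul_left]
    _ = ∑' (n : ℕ) (m : ℕ), ∫⁻ x, F n x * F m x ∂μ := by
        rw [lintegral_tsum (f := fun n x => ∑' m, F n x * F m x) (fun n => (Measurable.ennreal_tsum
          (fun m => (hFmeas n).mul (hFmeas m))).aemeasurable)]
        congr 1; funext n
        exact lintegral_tsum (fun m => ((hFmeas n).mul (hFmeas m)).aemeasurable)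
    _ ≤ ∑' (n : ℕ) (m : ℕ), ENNReal.ofReal (Real.sqrt (ζ n) * w n) * ENNReal.ofReal (Real.sqrt (ζ m) * w m) :=
        ENNReal.tsum_le_tsum (fun n => ENNReal.tsum_le_tsum (fun m => holder n m))
    _ = (ENNReal.ofReal (∑' n, Real.sqrt (ζ n) * w n)) ^ 2 := by
        rw [ENNReal.ofReal_tsum_of_nonneg (fun n => mul_nonneg (Real.sqrt_nonneg _) (hw0 n)) hw]
        rw [pow_two, ← ENNReal.tsum_mul_right]
        congr 1; funext n
        rw [← ENNReal.tsum_mul_left]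

lemma aux_prod_sum_integral {μ : Measure ℝ}
    (hmom : ∀ n : ℕ, Integrable (fun x : ℝ => x ^ n) μ)
    (p : ℕ → Polynomial ℝ) (ζ : ℕ → ℝ)
    (horth : ∀ m n : ℕ, ∫ x, (p n).eval x * (p m).eval x ∂μ = if m = n then ζ n else 0)
    (c : ℕ → ℂ) (t₁ t₂ : ℂ) (M : ℕ) :
    ∫ x, (∑ n ∈ Finset.range M, (((p n).eval x : ℝ) : ℂ) * t₁ ^ n / c n) *
         (∑ m ∈ Finset.range M, (((p m).eval x : ℝ) : ℂ) * t₂ ^ m / c m) ∂μ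
    = ∑ n ∈ Finset.range M, (ζ n : ℂ) * (t₁ * t₂) ^ n / (c n) ^ 2 := by
  have hintnm : ∀ n m : ℕ, Integrable
      (fun x => (((p n).eval x * (p m).eval x : ℝ) : ℂ) * (t₁ ^ n / c n * (t₂ ^ m / c m))) μ := by
    intro n m
    have h1 : Integrable (fun x => ((p n).eval x * (p m).eval x : ℝ)) μ := by
      have := aux_poly_int hmom (p n * p m); simpa [Polynomial.eval_mul] using this
    exact (h1.ofReal.mul_const _)
  have hrw : ∀ x : ℝ,
      (∑ n ∈ Finset.range M, (((p n).eval x : ℝ) : ℂ) * t₁ ^ n / c n) *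
      (∑ m ∈ Finset.range M, (((p m).eval x : ℝ) : ℂ) * t₂ ^ m / c m)
      = ∑ n ∈ Finset.range M, ∑ m ∈ Finset.range M,
          (((p n).eval x * (p m).eval x : ℝ) : ℂ) * (t₁ ^ n / c n * (t₂ ^ m / c m)) := by
    intro x
    rw [Finset.sum_mul_sum]
    refine Finset.sum_congr rfl (fun n _ => Finset.sum_congr rfl (fun m _ => ?_))
    push_cast; ring
  simp only [hrw]
  rw [integral_finset_sum _ (fun n _ => integrable_finset_sum _ (fun m _ => hintnm n m))]
  refine Finset.sum_congr rfl (fun n hn => ?_)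
  rw [integral_finset_sum _ (fun m _ => hintnm n m)]
  have hterm : ∀ m : ℕ, ∫ x, (((p n).eval x * (p m).eval x : ℝ) : ℂ) * (t₁ ^ n / c n * (t₂ ^ m / c m)) ∂μ
      = (if m = n then (ζ n : ℂ) else 0) * (t₁ ^ n / c n * (t₂ ^ m / c m)) := by
    intro m
    rw [integral_mul_const,
      show (∫ a, (((p n).eval a * (p m).eval a : ℝ) : ℂ) ∂μ)
        = ((∫ a, (p n).eval a * (p m).eval a ∂μ : ℝ) : ℂ) from integral_ofReal, horth m n]
    split <;> simp
  simp only [hterm]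
  rw [Finset.sum_eq_single_of_mem n hn]
  · rw [if_pos rfl]; ring
  · intro m _ hm; rw [if_neg hm, zero_mul]

/-- Proposition 1.1 (i): orthogonal polynomials, generating function, absolute
convergence a.e., `L²` convergence and the Parseval-type identity. -/
theorem stmt0
    (μ : Measure ℝ)
    (hmom : ∀ n : ℕ, Integrable (fun x : ℝ => x ^ n) μ)
    (hsupp : ∀ s : Set ℝ, s.Finite → μ sᶜ ≠ 0)
    (p : ℕ → Polynomial ℝ) (ζ : ℕ → ℝ) (hζ : ∀ n, 0 < ζ n)
    (horth : ∀ m n : ℕ,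
      ∫ x, (p n).eval x * (p m).eval x ∂μ = if m = n then ζ n else 0)
    (c : ℕ → ℂ) (hc : ∀ n, c n ≠ 0)
    (ρ : ℝ≥0∞) (hρpos : 0 < ρ)
    (hρ1 : ∀ z : ℂ, (‖z‖₊ : ℝ≥0∞) < ρ →
      Summable (fun n : ℕ => ‖(Real.sqrt (ζ n) : ℂ) / c n * z ^ n‖))
    (hρ2 : ∀ z : ℂ, ρ < (‖z‖₊ : ℝ≥0∞) →
      ¬ Summable (fun n : ℕ => ‖(Real.sqrt (ζ n) : ℂ) / c n * z ^ n‖)) :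
    ∃ (N : Set ℝ) (G : ℝ → ℂ → ℂ), MeasurableSet N ∧ μ N = 0 ∧
      (∀ x : ℝ, x ∉ N → ∀ t : ℂ, (‖t‖₊ : ℝ≥0∞) < ρ →
        Summable (fun n : ℕ => ‖(((p n).eval x : ℝ) : ℂ) * t ^ n / c n‖)) ∧
      (∀ t : ℂ, (‖t‖₊ : ℝ≥0∞) < ρ →
        Tendsto (fun M : ℕ =>
            ∫ x, ‖(∑ n ∈ Finset.range M, (((p n).eval x : ℝ) : ℂ) * t ^ n / c n) - G x t‖ ^ 2 ∂μ)
          atTop (nhds 0)) ∧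
      (∀ t₁ t₂ : ℂ, (‖t₁‖₊ : ℝ≥0∞) < ρ → (‖t₂‖₊ : ℝ≥0∞) < ρ →
        ∫ x, G x t₁ * G x t₂ ∂μ = ∑' n : ℕ, (ζ n : ℂ) * (t₁ * t₂) ^ n / (c n) ^ 2) := by
  classical
  have hon : ∀ n, ∫ x, (p n).eval x * (p n).eval x ∂μ = ζ n := by
    intro n; simpa using horth n n
  have hcpos : ∀ n, (0:ℝ) < ‖c n‖ := fun n => norm_pos_iff.mpr (hc n)
  -- norm of a generic term
  have hnorm : ∀ (x : ℝ) (t : ℂ) (n : ℕ),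
      ‖(((p n).eval x : ℝ) : ℂ) * t ^ n / c n‖ = |(p n).eval x| * (‖t‖ ^ n / ‖c n‖) := by
    intro x t n
    rw [norm_div, norm_mul, norm_pow, Complex.norm_real, Real.norm_eq_abs]
    ring
  -- summability of the sqrt-ζ weights
  have hS : ∀ t : ℂ, (‖t‖₊ : ℝ≥0∞) < ρ →
      Summable (fun n => Real.sqrt (ζ n) * (‖t‖ ^ n / ‖c n‖)) := by
    intro t ht
    refine (hρ1 t ht).congr fun n => ?_
    rw [norm_mul, norm_div, norm_pow, Complex.norm_real, Real.norm_eq_abs,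
      _root_.abs_of_nonneg (Real.sqrt_nonneg _)]
    ring
  -- the ENNReal-valued majorant
  set A : ℝ → ℝ → ℝ≥0∞ :=
    fun s x => ∑' n, ENNReal.ofReal (|(p n).eval x| * (s ^ n / ‖c n‖)) with hAdef
  have hAmeas : ∀ s, Measurable (A s) := fun s =>
    Measurable.ennreal_tsum fun n => ((p n).continuous.abs.measurable.mul_const _).ennreal_ofReal
  have hAfin : ∀ s : ℝ, 0 ≤ s → Summable (fun n => Real.sqrt (ζ n) * (s ^ n / ‖c n‖)) →
      ∫⁻ x, (A s x) ^ 2 ∂μ ≠ ⊤ := by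
    intro s hs0 hsum
    exact ne_top_of_le_ne_top (ENNReal.pow_ne_top ENNReal.ofReal_ne_top)
      (aux_key_lintegral hmom p ζ hζ hon _
        (fun n => div_nonneg (pow_nonneg hs0 n) (norm_nonneg _)) hsum)
  have hAne : ∀ s : ℝ, 0 ≤ s → Summable (fun n => Real.sqrt (ζ n) * (s ^ n / ‖c n‖)) →
      ∀ᵐ x ∂μ, A s x ≠ ⊤ := by
    intro s hs0 hsum
    filter_upwards [ae_lt_top ((hAmeas s).pow_const 2) (hAfin s hs0 hsum)] with x hx
    intro h
    rw [h, ENNReal.top_pow (by norm_num)] at hx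
    exact lt_irrefl _ hx
  have hAsummable : ∀ (s : ℝ), 0 ≤ s → ∀ (x : ℝ), A s x ≠ ⊤ →
      Summable (fun n => |(p n).eval x| * (s ^ n / ‖c n‖)) := by
    intro s hs0 x hx
    have h1 : (∑' n, (((|(p n).eval x| * (s ^ n / ‖c n‖)).toNNReal : ℝ≥0) : ℝ≥0∞)) ≠ ⊤ := hx
    have h2 := ENNReal.tsum_coe_ne_top_iff_summable.mp h1
    exact (NNReal.summable_coe.mpr h2).congr fun n => Real.coe_toNNReal _
      (mul_nonneg (abs_nonneg _) (div_nonneg (pow_nonneg hs0 n) (norm_nonneg _)))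
  have hAt : ∀ (t : ℂ) (x : ℝ),
      A ‖t‖ x = ∑' n, (‖(((p n).eval x : ℝ) : ℂ) * t ^ n / c n‖₊ : ℝ≥0∞) := by
    intro t x
    refine tsum_congr fun n => ?_
    rw [← hnorm x t n, ofReal_norm, enorm_eq_nnnorm]
  have habs : ∀ (t : ℂ) (x : ℝ), A ‖t‖ x ≠ ⊤ →
      Summable (fun n => ‖(((p n).eval x : ℝ) : ℂ) * t ^ n / c n‖) := by
    intro t x hx
    exact (hAsummable ‖t‖ (norm_nonneg t) x hx).congr fun n => (hnorm x t n).symm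
  have hAtoReal : ∀ (t : ℂ) (x : ℝ), A ‖t‖ x ≠ ⊤ →
      (A ‖t‖ x).toReal = ∑' n, ‖(((p n).eval x : ℝ) : ℂ) * t ^ n / c n‖ := by
    intro t x hx
    rw [hAt, ENNReal.tsum_toReal_eq (fun n => ENNReal.coe_ne_top)]
    simp [coe_nnnorm]
  -- the generating function
  set G : ℝ → ℂ → ℂ := fun x t => ∑' n, (((p n).eval x : ℝ) : ℂ) * t ^ n / c n with hGdef
  have hSnorm : ∀ (t : ℂ) (x : ℝ), A ‖t‖ x ≠ ⊤ → ∀ M : ℕ,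
      ‖∑ n ∈ Finset.range M, (((p n).eval x : ℝ) : ℂ) * t ^ n / c n‖ ≤ (A ‖t‖ x).toReal := by
    intro t x hx M
    rw [hAtoReal t x hx]
    exact (norm_sum_le _ _).trans
      (Summable.sum_le_tsum _ (fun n _ => norm_nonneg _) (habs t x hx))
  have hGnorm : ∀ (t : ℂ) (x : ℝ), A ‖t‖ x ≠ ⊤ → ‖G x t‖ ≤ (A ‖t‖ x).toReal := by
    intro t x hx
    rw [hAtoReal t x hx]
    exact norm_tsum_le_tsum_norm (habs t x hx)
  have hGtend : ∀ (t : ℂ) (x : ℝ), A ‖t‖ x ≠ ⊤ →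
      Tendsto (fun M => ∑ n ∈ Finset.range M, (((p n).eval x : ℝ) : ℂ) * t ^ n / c n)
        atTop (nhds (G x t)) :=
    fun t x hx => ((habs t x hx).of_norm.hasSum).tendsto_sum_nat
  have hSmeas : ∀ (t : ℂ) (M : ℕ),
      Measurable (fun x => ∑ n ∈ Finset.range M, (((p n).eval x : ℝ) : ℂ) * t ^ n / c n) := by
    intro t M
    refine Finset.measurable_sum _ fun n _ => ?_
    exact (((Complex.continuous_ofReal.comp (p n).continuous).mul continuous_const).div_const
      _).measurable
  have hGaesm : ∀ t : ℂ, (‖t‖₊ : ℝ≥0∞) < ρ → AEStronglyMeasurable (fun x => G x t) μ := by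
    intro t ht
    have := aemeasurable_of_tendsto_metrizable_ae atTop (fun M => (hSmeas t M).aemeasurable)
      ((hAne ‖t‖ (norm_nonneg t) (hS t ht)).mono fun x hx => hGtend t x hx)
    exact this.aestronglyMeasurable
  have hbound_int : ∀ t : ℂ, (‖t‖₊ : ℝ≥0∞) < ρ →
      Integrable (fun x => ((A ‖t‖ x) ^ 2).toReal) μ :=
    fun t ht => integrable_toReal_of_lintegral_ne_top ((hAmeas _).pow_const 2).aemeasurable
      (hAfin _ (norm_nonneg t) (hS t ht))
  -- the exceptional null set
  set Nq : ℚ → Set ℝ := fun q =>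
    if Summable (fun n => Real.sqrt (ζ n) * ((max (q:ℝ) 0) ^ n / ‖c n‖)) then
      {x | A (max (q:ℝ) 0) x = ⊤} else ∅ with hNqdef
  have hNqmeas : ∀ q, MeasurableSet (Nq q) := by
    intro q; rw [hNqdef]; dsimp only
    split
    · exact (hAmeas _) (measurableSet_singleton ⊤)
    · exact MeasurableSet.empty
  have hNq0 : ∀ q, μ (Nq q) = 0 := by
    intro q; rw [hNqdef]; dsimp only
    split
    · next h =>
      have h2 := hAne _ (le_max_right _ _) h
      rw [ae_iff] at h2
      simpa using h2
    · simp
  refine ⟨⋃ q : ℚ, Nq q, G, MeasurableSet.iUnion hNqmeas, measure_iUnion_null hNq0, ?_, ?_, ?_⟩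
  · -- (a) absolute convergence outside the null set
    intro x hx t ht
    obtain ⟨r₁, htr₁, hr₁ρ⟩ := ENNReal.lt_iff_exists_nnreal_btwn.mp ht
    obtain ⟨r₂, hr₁₂, hr₂ρ⟩ := ENNReal.lt_iff_exists_nnreal_btwn.mp hr₁ρ
    obtain ⟨q, hq₁, hq₂⟩ := exists_rat_btwn
      (show (r₁:ℝ) < (r₂:ℝ) from NNReal.coe_lt_coe.mpr (ENNReal.coe_lt_coe.mp hr₁₂))
    set s := max (q:ℝ) 0 with hs
    have hs0 : 0 ≤ s := le_max_right _ _
    have hts : ‖t‖ ≤ s := by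
      have h1 : ‖t‖ < (r₁:ℝ) := by
        have h2 := ENNReal.coe_lt_coe.mp htr₁
        exact_mod_cast h2
      exact le_trans (h1.trans hq₁).le (le_max_left _ _)
    have hsr₂ : s < (r₂:ℝ) := max_lt hq₂ ((NNReal.coe_nonneg r₁).trans_lt (hq₁.trans hq₂))
    have hnorms : ‖(s:ℂ)‖ = s := by
      rw [Complex.norm_real, Real.norm_eq_abs, _root_.abs_of_nonneg hs0]
    have hPs : Summable (fun n => Real.sqrt (ζ n) * (s ^ n / ‖c n‖)) := by
      have hlt : (‖(s:ℂ)‖₊ : ℝ≥0∞) < ρ := by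
        refine lt_trans ?_ hr₂ρ
        rw [ENNReal.coe_lt_coe, ← NNReal.coe_lt_coe, coe_nnnorm, hnorms]
        exact hsr₂
      refine (hS (s:ℂ) hlt).congr fun n => ?_
      rw [hnorms]
    have hxq : x ∉ Nq q := fun h => hx (Set.mem_iUnion.mpr ⟨q, h⟩)
    rw [hNqdef] at hxq; dsimp only at hxq
    rw [if_pos hPs] at hxq
    have hAx : A s x ≠ ⊤ := hxq
    have hgs := hAsummable s hs0 x hAx
    refine Summable.of_nonneg_of_le (fun n => norm_nonneg _) (fun n => ?_) hgs
    rw [hnorm]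
    gcongr

  · -- (b) L² convergence
    intro t ht
    have hae := hAne ‖t‖ (norm_nonneg t) (hS t ht)
    have hconv : Tendsto (fun M : ℕ =>
        ∫ x, ‖(∑ n ∈ Finset.range M, (((p n).eval x : ℝ) : ℂ) * t ^ n / c n) - G x t‖ ^ 2 ∂μ)
        atTop (nhds (∫ _ : ℝ, (0:ℝ) ∂μ)) := by
      refine tendsto_integral_of_dominated_convergence
        (fun x => 4 * ((A ‖t‖ x) ^ 2).toReal) ?_ ?_ ?_ ?_
      · intro M
        have h1 : AEStronglyMeasurable (fun x =>
            (∑ n ∈ Finset.range M, (((p n).eval x : ℝ) : ℂ) * t ^ n / c n) - G x t) μ :=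
          (hSmeas t M).aestronglyMeasurable.sub (hGaesm t ht)
        exact ((continuous_pow 2).comp continuous_norm).comp_aestronglyMeasurable h1
      · exact (hbound_int t ht).const_mul 4
      · intro M
        filter_upwards [hae] with x hx
        have h1 : ‖(∑ n ∈ Finset.range M, (((p n).eval x : ℝ) : ℂ) * t ^ n / c n) - G x t‖
            ≤ 2 * (A ‖t‖ x).toReal := by
          calc ‖(∑ n ∈ Finset.range M, (((p n).eval x : ℝ) : ℂ) * t ^ n / c n) - G x t‖
              ≤ ‖∑ n ∈ Finset.range M, (((p n).eval x : ℝ) : ℂ) * t ^ n / c n‖ + ‖G x t‖ :=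
                norm_sub_le _ _
          _ ≤ (A ‖t‖ x).toReal + (A ‖t‖ x).toReal := add_le_add (hSnorm t x hx M) (hGnorm t x hx)
          _ = 2 * (A ‖t‖ x).toReal := by ring
        calc ‖‖(∑ n ∈ Finset.range M, (((p n).eval x : ℝ) : ℂ) * t ^ n / c n) - G x t‖ ^ 2‖
            = ‖(∑ n ∈ Finset.range M, (((p n).eval x : ℝ) : ℂ) * t ^ n / c n) - G x t‖ ^ 2 := by
              rw [Real.norm_eq_abs, _root_.abs_of_nonneg (pow_nonneg (norm_nonneg _) 2)]
        _ ≤ (2 * (A ‖t‖ x).toReal) ^ 2 := pow_le_pow_left₀ (norm_nonneg _) h1 2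
        _ = 4 * ((A ‖t‖ x) ^ 2).toReal := by rw [ENNReal.toReal_pow]; ring
      · filter_upwards [hae] with x hx
        have h2 := (hGtend t x hx).sub (tendsto_const_nhds (x := G x t))
        rw [sub_self] at h2
        have h3 := (h2.norm).pow 2
        simpa using h3
    simpa using hconv
  · -- (c) the Parseval-type identity
    intro t₁ t₂ ht₁ ht₂
    have hae1 := hAne ‖t₁‖ (norm_nonneg t₁) (hS t₁ ht₁)
    have hae2 := hAne ‖t₂‖ (norm_nonneg t₂) (hS t₂ ht₂)
    have hDC : Tendsto (fun M : ℕ =>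
        ∫ x, (∑ n ∈ Finset.range M, (((p n).eval x : ℝ) : ℂ) * t₁ ^ n / c n) *
             (∑ m ∈ Finset.range M, (((p m).eval x : ℝ) : ℂ) * t₂ ^ m / c m) ∂μ)
        atTop (nhds (∫ x, G x t₁ * G x t₂ ∂μ)) := by
      refine tendsto_integral_of_dominated_convergence
        (fun x => ((A ‖t₁‖ x) ^ 2).toReal + ((A ‖t₂‖ x) ^ 2).toReal) ?_ ?_ ?_ ?_
      · intro M
        exact ((hSmeas t₁ M).aestronglyMeasurable.mul (hSmeas t₂ M).aestronglyMeasurable)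
      · exact (hbound_int t₁ ht₁).add (hbound_int t₂ ht₂)
      · intro M
        filter_upwards [hae1, hae2] with x hx1 hx2
        have h1 := hSnorm t₁ x hx1 M
        have h2 := hSnorm t₂ x hx2 M
        have ha : (0:ℝ) ≤ (A ‖t₁‖ x).toReal := ENNReal.toReal_nonneg
        have hb : (0:ℝ) ≤ (A ‖t₂‖ x).toReal := ENNReal.toReal_nonneg
        rw [norm_mul]
        calc ‖∑ n ∈ Finset.range M, (((p n).eval x : ℝ) : ℂ) * t₁ ^ n / c n‖ *
              ‖∑ m ∈ Finset.range M, (((p m).eval x : ℝ) : ℂ) * t₂ ^ m / c m‖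
            ≤ (A ‖t₁‖ x).toReal * (A ‖t₂‖ x).toReal :=
              mul_le_mul h1 h2 (norm_nonneg _) ha
        _ ≤ ((A ‖t₁‖ x) ^ 2).toReal + ((A ‖t₂‖ x) ^ 2).toReal := by
              rw [ENNReal.toReal_pow, ENNReal.toReal_pow]
              nlinarith [sq_nonneg ((A ‖t₁‖ x).toReal - (A ‖t₂‖ x).toReal)]
      · filter_upwards [hae1, hae2] with x hx1 hx2
        exact (hGtend t₁ x hx1).mul (hGtend t₂ x hx2)
    have heq : (fun M : ℕ =>
        ∫ x, (∑ n ∈ Finset.range M, (((p n).eval x : ℝ) : ℂ) * t₁ ^ n / c n) *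
             (∑ m ∈ Finset.range M, (((p m).eval x : ℝ) : ℂ) * t₂ ^ m / c m) ∂μ)
        = fun M : ℕ => ∑ n ∈ Finset.range M, (ζ n : ℂ) * (t₁ * t₂) ^ n / (c n) ^ 2 :=
      funext fun M => aux_prod_sum_integral hmom p ζ horth c t₁ t₂ M
    rw [heq] at hDC
    have hsummR : Summable (fun n => (ζ n : ℂ) * (t₁ * t₂) ^ n / (c n) ^ 2) := by
      refine Summable.of_norm ?_
      have huv := aux_summable_mul_nonneg (hS t₁ ht₁) (hS t₂ ht₂)
        (fun n => mul_nonneg (Real.sqrt_nonneg _)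
          (div_nonneg (pow_nonneg (norm_nonneg _) n) (norm_nonneg _)))
        (fun n => mul_nonneg (Real.sqrt_nonneg _)
          (div_nonneg (pow_nonneg (norm_nonneg _) n) (norm_nonneg _)))
      refine huv.congr fun n => ?_
      rw [norm_div, norm_mul, norm_pow, norm_pow, Complex.norm_real, Real.norm_eq_abs,
        _root_.abs_of_nonneg (hζ n).le, norm_mul]
      have hsq : Real.sqrt (ζ n) * Real.sqrt (ζ n) = ζ n := Real.mul_self_sqrt (hζ n).le
      linear_combination (‖t₁‖ ^ n * ‖t₂‖ ^ n / ‖c n‖ ^ 2) * hsq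
    exact tendsto_nhds_unique hDC hsummR.hasSum.tendsto_sum_nat
end

section
/- For 0 < q < 1, t₁, t₂ ∈ (−1,1) with t₁t₂ ≠ 0, every n ≥ 0 and every θ ∈ ℝ, one has Σ_{k=0}^n (q^{−n};q)_k (t₁e^{iθ};q)_k (t₁e^{−iθ};q)_k q^k / ((q;q)_k (t₁t₂;q)_k) = (t₁/t₂)^n Σ_{k=0}^n (q^{−n};q)_k (t₂e^{iθ};q)_k (t₂e^{−iθ};q)_k q^k / ((q;q)_k (t₁t₂;q)_k). -/
set_option maxHeartbeats 1000000
open Complex Finset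
noncomputable def qp (q a : ℂ) (n : ℕ) : ℂ := ∏ k ∈ Finset.range n, (1 - a * q ^ k)
lemma qp_zero (q a : ℂ) : qp q a 0 = 1 := by simp [qp]
lemma qp_succ (q a : ℂ) (k : ℕ) : qp q a (k + 1) = qp q a k * (1 - a * q ^ k) :=
  Finset.prod_range_succ _ _
lemma qp_peel (q a : ℂ) (k : ℕ) : qp q a (k + 1) = (1 - a) * qp q (a * q) k := by
  rw [qp, Finset.prod_range_succ']
  simp only [pow_zero, mul_one, qp]
  rw [mul_comm]
  congr 1
  exact Finset.prod_congr rfl fun i _ => by ring_nf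
lemma qp_ne_zero {q a : ℂ} (h : ∀ j : ℕ, a * q ^ j ≠ 1) (k : ℕ) : qp q a k ≠ 0 := by
  refine Finset.prod_ne_zero_iff.2 fun i _ => ?_
  rw [sub_ne_zero]
  exact fun hh => h i hh.symm
noncomputable def Ph (q u t₁ t₂ : ℂ) (n : ℕ) : ℂ :=
  ∑ k ∈ Finset.range (n + 1),
    qp q (q ^ (-(n : ℤ))) k * qp q (t₁ * u) k * qp q (t₁ * u⁻¹) k * q ^ k /
      (qp q q k * qp q (t₁ * t₂) k)

lemma termA (q A c a b B1 B2 B3 B4 B5 X : ℂ) (hq : q ≠ 0) (h4 : B4 ≠ 0) (h5 : B5 ≠ 0)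
    (hk : 1 - q * X ≠ 0) (hc1 : 1 - c ≠ 0) :
    (1 - c) * ((1 - A * q⁻¹) * B1 * ((1 - a) * B2) * ((1 - b) * B3) * (X * q) /
        (B4 * (1 - q * X) * ((1 - c) * B5)))
      - (1 - c) * (B1 * (1 - A * X) * ((1 - a) * B2) * ((1 - b) * B3) * (X * q) /
        (B4 * (1 - q * X) * ((1 - c) * B5)))
      = -(A * ((1 - a) * (1 - b)) * (B1 * B2 * B3 * X / (B4 * B5))) := by
  rw [← mul_div_assoc, ← mul_div_assoc, div_sub_div_same, ← mul_div_assoc, ← neg_div,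
    div_eq_div_iff (mul_ne_zero (mul_ne_zero h4 hk) (mul_ne_zero hc1 h5)) (mul_ne_zero h4 h5)]
  field_simp
  ring

lemma relA (q : ℝ) (hq₁ : 0 < q) (hq₂ : q < 1) (u t₁ t₂ : ℂ)
    (hc : ∀ j : ℕ, t₁ * t₂ * (q : ℂ) ^ j ≠ 1) (n : ℕ) :
    (1 - t₁ * t₂) * Ph q u t₁ t₂ (n + 1)
      = (1 - t₁ * t₂) * Ph q u t₁ t₂ n
        - (q : ℂ) ^ (-(n : ℤ)) * ((1 - t₁ * u) * (1 - t₁ * u⁻¹)) * Ph q u (q * t₁) t₂ n := by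
  have hq0 : (q : ℂ) ≠ 0 := by simpa using (ne_of_gt hq₁)
  have hqj : ∀ j : ℕ, (q : ℂ) * (q : ℂ) ^ j ≠ 1 := by
    intro j h
    have : ((q * q ^ j : ℝ) : ℂ) = ((1 : ℝ) : ℂ) := by push_cast; simpa using h
    have h2 : q * q ^ j = 1 := by exact_mod_cast this
    nlinarith [pow_le_one₀ hq₁.le hq₂.le (n := j), pow_pos hq₁ j]
  have hc1 : (1 : ℂ) - t₁ * t₂ ≠ 0 := by
    rw [sub_ne_zero]
    exact fun h => hc 0 (by simpa using h.symm)
  have hzero : qp (q : ℂ) ((q : ℂ) ^ (-(n : ℤ))) (n + 1) = 0 := by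
    refine Finset.prod_eq_zero (Finset.self_mem_range_succ n) ?_
    rw [← zpow_natCast (q : ℂ) n, ← zpow_add₀ hq0]
    simp
  have hFn : Ph (q : ℂ) u t₁ t₂ n
      = ∑ k ∈ Finset.range (n + 1 + 1),
          qp q (q ^ (-(n : ℤ))) k * qp q (t₁ * u) k * qp q (t₁ * u⁻¹) k * q ^ k /
            (qp q q k * qp q (t₁ * t₂) k) := by
    rw [Finset.sum_range_succ, hzero]
    simp [Ph]
  have key : (1 - t₁ * t₂) * Ph (q : ℂ) u t₁ t₂ (n + 1)
      - (1 - t₁ * t₂) * Ph (q : ℂ) u t₁ t₂ n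
      = -((q : ℂ) ^ (-(n : ℤ)) * ((1 - t₁ * u) * (1 - t₁ * u⁻¹)) * Ph (q : ℂ) u (q * t₁) t₂ n) := by
    rw [hFn, Ph, Ph, Finset.mul_sum, Finset.mul_sum, ← Finset.sum_sub_distrib,
      Finset.mul_sum, ← Finset.sum_neg_distrib]
    rw [Finset.sum_range_succ']
    simp only [Nat.cast_add, Nat.cast_one, neg_add]
    have h00 : (1 - t₁ * t₂) *
          (qp (q:ℂ) ((q:ℂ) ^ (-(n:ℤ) + -1)) 0 * qp (q:ℂ) (t₁ * u) 0 * qp (q:ℂ) (t₁ * u⁻¹) 0 * (q:ℂ) ^ (0:ℕ) /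
            (qp (q:ℂ) (q:ℂ) 0 * qp (q:ℂ) (t₁ * t₂) 0))
        - (1 - t₁ * t₂) *
          (qp (q:ℂ) ((q:ℂ) ^ (-(n:ℤ))) 0 * qp (q:ℂ) (t₁ * u) 0 * qp (q:ℂ) (t₁ * u⁻¹) 0 * (q:ℂ) ^ (0:ℕ) /
            (qp (q:ℂ) (q:ℂ) 0 * qp (q:ℂ) (t₁ * t₂) 0)) = 0 := by
      simp [qp_zero]
    rw [h00, add_zero]
    refine Finset.sum_congr rfl fun k _ => ?_
    have hA1 : (q:ℂ) ^ (-(n:ℤ) + -1) = (q:ℂ) ^ (-(n:ℤ)) * (q:ℂ)⁻¹ := by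
      rw [zpow_add₀ hq0, zpow_neg_one]
    have e1 : qp (q:ℂ) ((q:ℂ) ^ (-(n:ℤ) + -1)) (k+1)
        = (1 - (q:ℂ) ^ (-(n:ℤ)) * (q:ℂ)⁻¹) * qp (q:ℂ) ((q:ℂ) ^ (-(n:ℤ))) k := by
      rw [qp_peel, hA1]
      congr 2
      field_simp
    have e3 : qp (q:ℂ) (t₁ * u) (k+1) = (1 - t₁*u) * qp (q:ℂ) ((q:ℂ) * t₁ * u) k := by
      rw [qp_peel]; congr 2; ring
    have e4 : qp (q:ℂ) (t₁ * u⁻¹) (k+1) = (1 - t₁*u⁻¹) * qp (q:ℂ) ((q:ℂ) * t₁ * u⁻¹) k := by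
      rw [qp_peel]; congr 2; ring
    have e5 : qp (q:ℂ) (t₁ * t₂) (k+1) = (1 - t₁*t₂) * qp (q:ℂ) ((q:ℂ) * t₁ * t₂) k := by
      rw [qp_peel]; congr 2; ring
    rw [e1, e3, e4, e5, qp_succ (q:ℂ) ((q:ℂ) ^ (-(n:ℤ))) k, qp_succ (q:ℂ) (q:ℂ) k,
      pow_succ (q:ℂ) k]
    exact termA (q:ℂ) ((q:ℂ) ^ (-(n:ℤ))) (t₁*t₂) (t₁*u) (t₁*u⁻¹)
      (qp (q:ℂ) ((q:ℂ) ^ (-(n:ℤ))) k) (qp (q:ℂ) ((q:ℂ)*t₁*u) k) (qp (q:ℂ) ((q:ℂ)*t₁*u⁻¹) k)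
      (qp (q:ℂ) (q:ℂ) k) (qp (q:ℂ) ((q:ℂ)*t₁*t₂) k) ((q:ℂ)^k)
      hq0 (qp_ne_zero hqj k) (qp_ne_zero (fun j h => hc (j+1) (by rw [← h]; ring)) k)
      (sub_ne_zero.mpr fun h => hqj k h.symm) hc1
  linear_combination key

lemma termC (q A a b c B1 B2 B3 B4 G H X : ℂ) (hq : q ≠ 0) (h4 : B4 ≠ 0) (hG : G ≠ 0)
    (hqX : 1 - q * X ≠ 0) (hc : 1 - c ≠ 0) (hcq : 1 - c * q ≠ 0) (hcqX : 1 - c * q * X ≠ 0)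
    (hGH : G * (1 - c * q * X) = (1 - c * q) * H) :
    (1 - c) * (1 - c * q) *
        ((1 - A) * B1 * ((1 - a) * B2) * ((1 - b) * B3) * (X * q) /
            (B4 * (1 - q * X) * ((1 - c) * G))
          - (1 - A) * B1 * ((1 - a) * B2) * ((1 - b) * B3) * (X * q) /
            (B4 * (1 - q * X) * (G * (1 - c * q * X))))
      = c * q * (1 - A) * ((1 - a) * (1 - b)) * (B1 * B2 * B3 * X / (B4 * H)) := by
  have hH : H = G * (1 - c * q * X) / (1 - c * q) := by
    rw [eq_div_iff hcq]
    linear_combination -hGH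
  rw [hH]
  field_simp
  ring

lemma relC (q : ℝ) (hq₁ : 0 < q) (hq₂ : q < 1) (u t₁ t₂ : ℂ)
    (hc : ∀ j : ℕ, t₁ * t₂ * (q : ℂ) ^ j ≠ 1) (n : ℕ) :
    (1 - t₁ * t₂) * (1 - t₁ * t₂ * q) *
        (Ph q u t₁ t₂ (n + 1) - Ph q u t₁ ((q : ℂ) * t₂) (n + 1))
      = t₁ * t₂ * (q : ℂ) * (1 - (q : ℂ) ^ (-(n : ℤ) + -1)) * ((1 - t₁ * u) * (1 - t₁ * u⁻¹)) *
        Ph q u ((q : ℂ) * t₁) ((q : ℂ) * t₂) n := by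
  have hq0 : (q : ℂ) ≠ 0 := by simpa using (ne_of_gt hq₁)
  have hqj : ∀ j : ℕ, (q : ℂ) * (q : ℂ) ^ j ≠ 1 := by
    intro j h
    have : ((q * q ^ j : ℝ) : ℂ) = ((1 : ℝ) : ℂ) := by push_cast; simpa using h
    have h2 : q * q ^ j = 1 := by exact_mod_cast this
    nlinarith [pow_le_one₀ hq₁.le hq₂.le (n := j), pow_pos hq₁ j]
  have hcs : ∀ j : ℕ, t₁ * t₂ * (q:ℂ) * (q:ℂ) ^ j ≠ 1 := fun j h => hc (j+1) (by rw [← h]; ring)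
  have hc1 : (1 : ℂ) - t₁ * t₂ ≠ 0 := by
    rw [sub_ne_zero]; exact fun h => hc 0 (by simpa using h.symm)
  have hcq1 : (1 : ℂ) - t₁ * t₂ * q ≠ 0 := by
    rw [sub_ne_zero]; exact fun h => hcs 0 (by simpa using h.symm)
  rw [Ph, Ph, Ph, ← Finset.sum_sub_distrib, Finset.mul_sum, Finset.mul_sum,
    Finset.sum_range_succ']
  simp only [Nat.cast_add, Nat.cast_one, neg_add]
  have h00 : (1 - t₁ * t₂) * (1 - t₁ * t₂ * (q:ℂ)) *
      (qp (q:ℂ) ((q:ℂ) ^ (-(n:ℤ) + -1)) 0 * qp (q:ℂ) (t₁ * u) 0 * qp (q:ℂ) (t₁ * u⁻¹) 0 * (q:ℂ) ^ (0:ℕ) /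
          (qp (q:ℂ) (q:ℂ) 0 * qp (q:ℂ) (t₁ * t₂) 0)
        - qp (q:ℂ) ((q:ℂ) ^ (-(n:ℤ) + -1)) 0 * qp (q:ℂ) (t₁ * u) 0 * qp (q:ℂ) (t₁ * u⁻¹) 0 * (q:ℂ) ^ (0:ℕ) /
          (qp (q:ℂ) (q:ℂ) 0 * qp (q:ℂ) (t₁ * ((q:ℂ) * t₂)) 0)) = 0 := by
    simp [qp_zero]
  rw [h00, add_zero]
  refine Finset.sum_congr rfl fun k _ => ?_
  have hA1 : (q:ℂ) ^ (-(n:ℤ) + -1) * (q:ℂ) = (q:ℂ) ^ (-(n:ℤ)) := by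
    rw [zpow_add₀ hq0, zpow_neg_one]
    field_simp
  have e1 : qp (q:ℂ) ((q:ℂ) ^ (-(n:ℤ) + -1)) (k+1)
      = (1 - (q:ℂ) ^ (-(n:ℤ) + -1)) * qp (q:ℂ) ((q:ℂ) ^ (-(n:ℤ))) k := by
    rw [qp_peel, hA1]
  have e3 : qp (q:ℂ) (t₁ * u) (k+1) = (1 - t₁*u) * qp (q:ℂ) ((q:ℂ) * t₁ * u) k := by
    rw [qp_peel]; congr 2; ring
  have e4 : qp (q:ℂ) (t₁ * u⁻¹) (k+1) = (1 - t₁*u⁻¹) * qp (q:ℂ) ((q:ℂ) * t₁ * u⁻¹) k := by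
    rw [qp_peel]; congr 2; ring
  have e5 : qp (q:ℂ) (t₁ * t₂) (k+1) = (1 - t₁*t₂) * qp (q:ℂ) (t₁ * t₂ * (q:ℂ)) k := by
    rw [qp_peel]
  have e6 : qp (q:ℂ) (t₁ * ((q:ℂ) * t₂)) (k+1)
      = qp (q:ℂ) (t₁ * t₂ * (q:ℂ)) k * (1 - t₁ * t₂ * (q:ℂ) * (q:ℂ) ^ k) := by
    rw [show t₁ * ((q:ℂ) * t₂) = t₁ * t₂ * (q:ℂ) by ring, qp_succ]
  have e7 : qp (q:ℂ) ((q:ℂ) * t₁ * ((q:ℂ) * t₂)) k = qp (q:ℂ) (t₁ * t₂ * (q:ℂ) * (q:ℂ)) k := by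
    rw [show (q:ℂ) * t₁ * ((q:ℂ) * t₂) = t₁ * t₂ * (q:ℂ) * (q:ℂ) by ring]
  have hGH : qp (q:ℂ) (t₁ * t₂ * (q:ℂ)) k * (1 - t₁ * t₂ * (q:ℂ) * (q:ℂ) ^ k)
      = (1 - t₁ * t₂ * (q:ℂ)) * qp (q:ℂ) (t₁ * t₂ * (q:ℂ) * (q:ℂ)) k := by
    rw [← qp_succ, qp_peel]
  rw [e1, e3, e4, e5, e6, e7, qp_succ (q:ℂ) (q:ℂ) k, pow_succ (q:ℂ) k]
  exact termC (q:ℂ) ((q:ℂ) ^ (-(n:ℤ) + -1)) (t₁*u) (t₁*u⁻¹) (t₁*t₂)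
    (qp (q:ℂ) ((q:ℂ) ^ (-(n:ℤ))) k) (qp (q:ℂ) ((q:ℂ)*t₁*u) k) (qp (q:ℂ) ((q:ℂ)*t₁*u⁻¹) k)
    (qp (q:ℂ) (q:ℂ) k) (qp (q:ℂ) (t₁*t₂*(q:ℂ)) k) (qp (q:ℂ) (t₁*t₂*(q:ℂ)*(q:ℂ)) k) ((q:ℂ)^k)
    hq0 (qp_ne_zero hqj k)
    (qp_ne_zero (fun j h => hc (j+1) (by rw [← h]; ring)) k)
    (sub_ne_zero.mpr fun h => hqj k h.symm) hc1 hcq1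
    (sub_ne_zero.mpr fun h => hcs k h.symm) hGH


lemma key (q : ℝ) (hq₁ : 0 < q) (hq₂ : q < 1) (u : ℂ) (hu : u ≠ 0) :
    ∀ n : ℕ, ∀ t₁ t₂ : ℂ, (∀ j : ℕ, t₁ * t₂ * (q : ℂ) ^ j ≠ 1) →
      t₂ ^ n * Ph q u t₁ t₂ n = t₁ ^ n * Ph q u t₂ t₁ n := by
  have hq0 : (q : ℂ) ≠ 0 := by simpa using (ne_of_gt hq₁)
  have hqj : ∀ j : ℕ, (q : ℂ) * (q : ℂ) ^ j ≠ 1 := by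
    intro j h
    have : ((q * q ^ j : ℝ) : ℂ) = ((1 : ℝ) : ℂ) := by push_cast; simpa using h
    have h2 : q * q ^ j = 1 := by exact_mod_cast this
    nlinarith [pow_le_one₀ hq₁.le hq₂.le (n := j), pow_pos hq₁ j]
  intro n
  induction n using Nat.strong_induction_on with
  | _ n ih =>
    match n with
    | 0 =>
      intro t₁ t₂ hc
      simp [Ph, qp]
    | 1 =>
      intro t₁ t₂ hc
      have hc1 : (1 : ℂ) - t₁ * t₂ ≠ 0 := by
        rw [sub_ne_zero]; exact fun h => hc 0 (by simpa using h.symm)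
      have hq1 : (1 : ℂ) - (q : ℂ) ≠ 0 := by
        rw [sub_ne_zero]; exact fun h => hqj 0 (by simpa using h.symm)
      simp only [Ph, Finset.sum_range_succ, Finset.sum_range_zero, qp, Finset.prod_range_one,
        Finset.prod_range_zero, Nat.cast_one, pow_zero, pow_one, zpow_neg_one]
      rw [show ((t₂ * t₁ : ℂ)) = t₁ * t₂ by ring]
      have hc1' : (1 : ℂ) - t₂ * t₁ ≠ 0 := by rwa [mul_comm]
      field_simp
      ring
    | (m + 2) =>
      intro t₁ t₂ hc
      have hc' : ∀ j : ℕ, t₂ * t₁ * (q:ℂ) ^ j ≠ 1 := fun j h => hc j (by rw [← h]; ring)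
      have hcq : ∀ j : ℕ, (q:ℂ) * t₁ * t₂ * (q:ℂ) ^ j ≠ 1 :=
        fun j h => hc (j+1) (by rw [← h]; ring)
      have hcq' : ∀ j : ℕ, (q:ℂ) * t₂ * t₁ * (q:ℂ) ^ j ≠ 1 :=
        fun j h => hc (j+1) (by rw [← h]; ring)
      have hcqq : ∀ j : ℕ, (q:ℂ) * t₁ * ((q:ℂ) * t₂) * (q:ℂ) ^ j ≠ 1 :=
        fun j h => hc (j+2) (by rw [← h]; ring)
      have e1 := ih (m+1) (by omega) t₁ t₂ hc
      have e2 := ih (m+1) (by omega) ((q:ℂ) * t₁) t₂ hcq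
      have e3 := ih (m+1) (by omega) ((q:ℂ) * t₂) t₁ hcq'
      have e6 := ih m (by omega) ((q:ℂ) * t₁) ((q:ℂ) * t₂) hcqq
      have A1 := relA q hq₁ hq₂ u t₁ t₂ hc (m+1)
      have A2 := relA q hq₁ hq₂ u t₂ t₁ hc' (m+1)
      have C1 := relC q hq₁ hq₂ u t₂ t₁ hc' m
      have C2 := relC q hq₁ hq₂ u t₁ t₂ hc m
      simp only [Nat.cast_add, Nat.cast_one, neg_add] at A1 A2
      rw [mul_pow] at e2 e3 e6
      have hz : (q:ℂ) ^ (-(m:ℤ) + -1) * ((q:ℂ) ^ m * (q:ℂ)) = 1 := by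
        rw [show ((q:ℂ)^m * (q:ℂ)) = (q:ℂ)^((m:ℤ)+1) from by
          rw [zpow_add₀ hq0, zpow_natCast, zpow_one], ← zpow_add₀ hq0,
          show (-(m:ℤ) + -1 + ((m:ℤ)+1)) = 0 by ring, zpow_zero]
      have huv : u * u⁻¹ = 1 := mul_inv_cancel₀ hu
      have hc1 : (1 : ℂ) - t₁ * t₂ ≠ 0 := by
        rw [sub_ne_zero]; exact fun h => hc 0 (by simpa using h.symm)
      have hcq1 : (1 : ℂ) - t₁ * t₂ * q ≠ 0 := by
        rw [sub_ne_zero]; exact fun h => hc 1 (by rw [pow_one]; exact h.symm)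
      have hD : (1 - t₁*t₂) * ((1 - t₁*t₂) * ((1 - t₁*t₂*(q:ℂ)) * (q:ℂ)^m)) ≠ 0 :=
        mul_ne_zero hc1 (mul_ne_zero hc1 (mul_ne_zero hcq1 (pow_ne_zero m hq0)))
      refine mul_left_cancel₀ hD ?_
      linear_combination
        ((1 - t₁*t₂) * (1 - t₁*t₂*(q:ℂ)) * (q:ℂ)^m * t₂^(m+2)) * A1
        - ((1 - t₁*t₂) * (1 - t₁*t₂*(q:ℂ)) * (q:ℂ)^m * t₁^(m+2)) * A2
        - ((1 - t₁*t₂) * (1 - t₁*t₂*(q:ℂ)) * (q:ℂ)^m * t₂ * (q:ℂ)^(-(m:ℤ) + -1)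
            * ((1 - t₁*u) * (1 - t₁*u⁻¹))) * e2
        + ((1 - t₁*t₂) * (1 - t₁*t₂*(q:ℂ)) * (q:ℂ)^m * t₁ * (q:ℂ)^(-(m:ℤ) + -1)
            * ((1 - t₂*u) * (1 - t₂*u⁻¹))) * e3
        + (-( (1 - t₁*t₂) * (1 - t₁*t₂*(q:ℂ)) * (q:ℂ)^m * t₁ * t₂ *
              ((1 - t₁*u) * (1 - t₁*u⁻¹) * t₁^m * Ph q u t₂ ((q:ℂ) * t₁) (m+1)
                - (1 - t₂*u) * (1 - t₂*u⁻¹) * t₂^m * Ph q u t₁ ((q:ℂ) * t₂) (m+1)))) * hz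
        + ((q:ℂ)^m * ((1 - t₁*u) * (1 - t₁*u⁻¹)) * t₁^(m+1) * t₂) * C1
        - ((q:ℂ)^m * ((1 - t₂*u) * (1 - t₂*u⁻¹)) * t₂^(m+1) * t₁) * C2
        - ((1 - t₁*u) * (1 - t₁*u⁻¹) * ((1 - t₂*u) * (1 - t₂*u⁻¹)) * (q:ℂ) * t₁^2 * t₂^2
            * (1 - (q:ℂ)^(-(m:ℤ) + -1))) * e6
        + ((1 - t₁*t₂) * (1 - t₁*t₂*(q:ℂ)) * (q:ℂ)^m *
            ((1 - t₁*t₂)*t₂ + (1 - t₂*u) * (1 - t₂*u⁻¹) * t₁)) * e1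
        + ((1 - t₁*t₂) * (1 - t₁*t₂*(q:ℂ)) * (q:ℂ)^m * t₁^(m+2) * t₂ * (t₂ - t₁)
            * Ph q u t₂ t₁ (m+1)) * huv


/-- The symmetry of the Al-Salam--Chihara polynomials in `t₁, t₂`
(the `₃φ₂` transformation (2.11)). -/
theorem stmt4 (q t₁ t₂ : ℝ) (hq₁ : 0 < q) (hq₂ : q < 1)
    (ht₁ : t₁ ∈ Set.Ioo (-1 : ℝ) 1) (ht₂ : t₂ ∈ Set.Ioo (-1 : ℝ) 1)
    (ht : t₁ * t₂ ≠ 0) (n : ℕ) (θ : ℝ) :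
    ∑ k ∈ Finset.range (n + 1),
        qp q ((q : ℂ) ^ (-(n : ℤ))) k * qp q (t₁ * Complex.exp (θ * Complex.I)) k *
          qp q (t₁ * Complex.exp (-(θ * Complex.I))) k * (q : ℂ) ^ k /
        (qp q q k * qp q (t₁ * t₂) k)
      = ((t₁ : ℂ) / t₂) ^ n *
        ∑ k ∈ Finset.range (n + 1),
          qp q ((q : ℂ) ^ (-(n : ℤ))) k * qp q (t₂ * Complex.exp (θ * Complex.I)) k *
            qp q (t₂ * Complex.exp (-(θ * Complex.I))) k * (q : ℂ) ^ k /
          (qp q q k * qp q (t₁ * t₂) k) := by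
  set u : ℂ := Complex.exp (θ * Complex.I) with hudef
  have hu : u ≠ 0 := Complex.exp_ne_zero _
  have hexp : Complex.exp (-(θ * Complex.I)) = u⁻¹ := by
    rw [Complex.exp_neg]
  rw [hexp]
  have hc : ∀ j : ℕ, (t₁ : ℂ) * (t₂ : ℂ) * (q : ℂ) ^ j ≠ 1 := by
    intro j h
    have h2 : t₁ * t₂ * q ^ j = 1 := by exact_mod_cast h
    have hq1 : |t₁| < 1 := abs_lt.mpr ⟨ht₁.1, ht₁.2⟩
    have hq2 : |t₂| < 1 := abs_lt.mpr ⟨ht₂.1, ht₂.2⟩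
    have hab : |t₁| * |t₂| < 1 := by nlinarith [abs_nonneg t₁, abs_nonneg t₂]
    have h3 : |t₁ * t₂ * q ^ j| < 1 := by
      rw [abs_mul, abs_mul, abs_of_pos (pow_pos hq₁ j)]
      nlinarith [abs_nonneg t₁, abs_nonneg t₂, pow_pos hq₁ j,
        pow_le_one₀ hq₁.le hq₂.le (n := j), mul_nonneg (abs_nonneg t₁) (abs_nonneg t₂)]
    rw [h2] at h3
    simp at h3
  have hkey := key q hq₁ hq₂ u hu n t₁ t₂ hc
  have ht₂0 : (t₂ : ℂ) ≠ 0 := by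
    intro h
    exact ht (mul_eq_zero.mpr (Or.inr (show t₂ = 0 by exact_mod_cast h)))
  have hR : Ph (q : ℂ) u (t₂ : ℂ) (t₁ : ℂ) n
      = ∑ k ∈ Finset.range (n + 1),
        qp q ((q : ℂ) ^ (-(n : ℤ))) k * qp q (t₂ * u) k *
          qp q (t₂ * u⁻¹) k * (q : ℂ) ^ k /
        (qp q q k * qp q (t₁ * t₂) k) := by
    rw [Ph]
    refine Finset.sum_congr rfl fun k _ => ?_
    rw [show ((t₂ : ℂ) * (t₁ : ℂ)) = ((t₁ : ℂ) * (t₂ : ℂ)) by ring]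
  have hL : Ph (q : ℂ) u (t₁ : ℂ) (t₂ : ℂ) n
      = ∑ k ∈ Finset.range (n + 1),
        qp q ((q : ℂ) ^ (-(n : ℤ))) k * qp q (t₁ * u) k *
          qp q (t₁ * u⁻¹) k * (q : ℂ) ^ k /
        (qp q q k * qp q (t₁ * t₂) k) := rfl
  rw [← hL, ← hR, div_pow, div_mul_eq_mul_div, eq_div_iff (pow_ne_zero n ht₂0)]
  linear_combination hkey
end

section
/- For 0 < q < 1, t₁, t₂ ∈ (−1,1) with t₁ ≠ 0, θ ∈ ℝ, and t ∈ ℂ with |t| < 1, the Al-Salam–Chihara polynomials p_n(x; t₁, t₂) satisfy the generating function Σ_{n=0}^∞ (t₁t₂;q)_n p_n(cos θ; t₁,t₂) (t/t₁)^n / (q;q)_n = (tt₁, tt₂; q)_∞ / (te^{iθ}, te^{−iθ}; q)_∞. -/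
open MeasureTheory Complex Filter Finset

/-- The infinite q-shifted factorial `(a;q)_∞`. -/
noncomputable def qpi (q a : ℂ) : ℂ := ∏' k : ℕ, (1 - a * q ^ k)

/-- The Al-Salam--Chihara polynomial `p_n(cos θ; t₁, t₂)`, as a function of `θ`. -/
noncomputable def ascP (q t₁ t₂ : ℂ) (n : ℕ) (θ : ℝ) : ℂ :=
  ∑ k ∈ Finset.range (n + 1),
    qp q (q ^ (-(n : ℤ))) k * qp q (t₁ * Complex.exp (θ * Complex.I)) k *
      qp q (t₁ * Complex.exp (-(θ * Complex.I))) k * q ^ k /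
    (qp q q k * qp q (t₁ * t₂) k)

namespace ASCAux

lemma qp_zero (q a : ℂ) : qp q a 0 = 1 := by simp [qp]

lemma qp_succ (q a : ℂ) (n : ℕ) : qp q a (n + 1) = qp q a n * (1 - a * q ^ n) :=
  Finset.prod_range_succ _ _

lemma qp_succ' (q a : ℂ) (n : ℕ) : qp q a (n + 1) = (1 - a) * qp q (a * q) n := by
  rw [qp, Finset.prod_range_succ']
  rw [mul_comm]
  congr 1
  · simp
  · unfold qp; apply Finset.prod_congr rfl; intro k _; ring

lemma qp_add (q a : ℂ) (n m : ℕ) : qp q a (n + m) = qp q a n * qp q (a * q ^ n) m := by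
  rw [qp, Finset.prod_range_add]
  congr 1
  unfold qp
  apply Finset.prod_congr rfl; intro k _; rw [pow_add]; ring

lemma qp_one (q : ℂ) (m : ℕ) (hm : m ≠ 0) : qp q 1 m = 0 := by
  obtain ⟨k, rfl⟩ := Nat.exists_eq_succ_of_ne_zero hm
  rw [qp_succ']
  simp

lemma qp_ne_zero {q : ℝ} (hq₁ : 0 < q) (hq₂ : q < 1) {c : ℂ} (hc : ‖c‖ < 1) (n : ℕ) :
    qp (q : ℂ) c n ≠ 0 := by
  rw [qp]
  apply Finset.prod_ne_zero_iff.mpr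
  intro k _ h
  have h1 : c * (q : ℂ) ^ k = 1 := by linear_combination -h
  have h2 : ‖c * (q : ℂ) ^ k‖ < 1 := by
    rw [norm_mul, norm_pow, Complex.norm_real, Real.norm_eq_abs, abs_of_pos hq₁]
    calc ‖c‖ * q ^ k ≤ ‖c‖ * 1 := by
          apply mul_le_mul_of_nonneg_left _ (norm_nonneg c)
          exact pow_le_one₀ hq₁.le hq₂.le
      _ < 1 := by simpa using hc
  rw [h1] at h2; simp at h2

lemma one_sub_qpow_ne {q : ℝ} (hq₁ : 0 < q) (hq₂ : q < 1) (m : ℕ) (hm : m ≠ 0) :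
    (1 : ℂ) - (q : ℂ) ^ m ≠ 0 := by
  intro h
  have h1 : ((q ^ m : ℝ) : ℂ) = ((1:ℝ):ℂ) := by push_cast; linear_combination -h
  have h2 : (q : ℝ) ^ m < 1 := pow_lt_one₀ hq₁.le hq₂ hm
  have := Complex.ofReal_inj.mp h1
  linarith

lemma qq_ne_zero {q : ℝ} (hq₁ : 0 < q) (hq₂ : q < 1) (n : ℕ) : qp (q:ℂ) (q:ℂ) n ≠ 0 := by
  apply qp_ne_zero hq₁ hq₂
  simpa [Complex.norm_real, Real.norm_eq_abs, abs_of_pos hq₁] using hq₂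

/-- `(q^{-N};q)_k (q^k - q^N) = (1-q^N)(q^{1-N};q)_k` (scalar contiguity in the first parameter). -/
lemma scalar_id {q : ℂ} (hq : q ≠ 0) (N : ℤ) (k : ℕ) :
    qp q (q ^ (-N)) k * ((q : ℂ) ^ (k:ℤ) - q ^ N) = (1 - q ^ N) * qp q (q ^ (1 - N)) k := by
  have e1 : qp q (q ^ (-N)) (k + 1) = qp q (q ^ (-N)) k * (1 - q ^ ((k:ℤ) - N)) := by
    rw [qp_succ]
    congr 2
    rw [zpow_sub₀ hq, zpow_neg, zpow_natCast]
    field_simp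
  have e2 : qp q (q ^ (-N)) (k + 1) = (1 - q ^ (-N)) * qp q (q ^ (1 - N)) k := by
    rw [qp_succ']
    congr 2
    rw [zpow_sub₀ hq, zpow_neg]
    field_simp
  have e3 : qp q (q ^ (-N)) k * (1 - q ^ ((k:ℤ) - N)) = (1 - q ^ (-N)) * qp q (q ^ (1 - N)) k := by
    rw [← e1, e2]
  have h4 : (1 - q ^ ((k:ℤ) - N)) * (-(q ^ N)) = q ^ (k:ℤ) - q ^ N := by
    have : q ^ ((k:ℤ) - N) * q ^ N = q ^ (k:ℤ) := by
      rw [← zpow_add₀ hq, sub_add_cancel]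
    linear_combination this
  have h5 : (1 - q ^ (-N)) * (-(q ^ N)) = 1 - q ^ N := by
    have : q ^ (-N) * q ^ N = 1 := by rw [← zpow_add₀ hq]; simp
    linear_combination this
  calc qp q (q ^ (-N)) k * (q ^ (k:ℤ) - q ^ N)
      = qp q (q ^ (-N)) k * (1 - q ^ ((k:ℤ) - N)) * (-(q ^ N)) := by rw [mul_assoc, h4]
    _ = (1 - q ^ (-N)) * qp q (q ^ (1 - N)) k * (-(q ^ N)) := by rw [e3]
    _ = (1 - q ^ N) * qp q (q ^ (1 - N)) k := by rw [mul_right_comm, h5]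

end ASCAux

namespace ASCAux

/-- Rigidity: a continuous function with `f z = f (q z)` is constant. -/
lemma qRigid {q : ℝ} (hq₁ : 0 < q) (hq₂ : q < 1) {f : ℂ → ℂ} (hf : Continuous f)
    (hper : ∀ z : ℂ, f z = f ((q : ℂ) * z)) (z w : ℂ) : f z = f w := by
  have key : ∀ v : ℂ, f v = f 0 := by
    intro v
    have h1 : ∀ N : ℕ, f v = f ((q : ℂ) ^ N * v) := by
      intro N
      induction N with
      | zero => simp
      | succ n ih => rw [ih, hper ((q:ℂ)^n * v)]; congr 1; ring
    have hq : ‖(q : ℂ)‖ < 1 := by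
      simpa [Complex.norm_real, Real.norm_eq_abs, abs_of_pos hq₁] using hq₂
    have h2 : Filter.Tendsto (fun N : ℕ => (q : ℂ) ^ N * v) Filter.atTop (nhds 0) := by
      simpa using (tendsto_pow_atTop_nhds_zero_of_norm_lt_one hq).mul_const v
    have h3 : Filter.Tendsto (fun N : ℕ => f ((q : ℂ) ^ N * v)) Filter.atTop (nhds (f 0)) :=
      (hf.tendsto 0).comp h2
    have h4 : Filter.Tendsto (fun _ : ℕ => f v) Filter.atTop (nhds (f v)) := tendsto_const_nhds
    exact tendsto_nhds_unique (h4.congr fun N => h1 N) h3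
  rw [key z, key w]

lemma continuous_qp_comp {q : ℂ} {g : ℂ → ℂ} (hg : Continuous g) (k : ℕ) :
    Continuous fun s => qp q (g s) k := by
  unfold qp
  apply continuous_finset_prod
  intro j _
  exact continuous_const.sub (hg.mul continuous_const)

/-- `V_n(b) = ₂φ₁(q^{-n}, b; 0; q, q)`. -/
noncomputable def Vfun (q : ℂ) (n : ℕ) (b : ℂ) : ℂ :=
  ∑ k ∈ Finset.range (n + 1), qp q (q ^ (-(n : ℤ))) k * qp q b k * q ^ k / qp q q k

lemma continuous_Vfun (q : ℂ) (n : ℕ) : Continuous fun b => Vfun q n b := by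
  unfold Vfun
  apply continuous_finset_sum
  intro k _
  exact (((continuous_const.mul (continuous_qp_comp continuous_id k)).mul
    continuous_const).div_const _)

lemma V_contig {q : ℝ} (hq₁ : 0 < q) (hq₂ : q < 1) (n : ℕ) (b : ℂ) :
    Vfun (q:ℂ) (n+1) b = Vfun (q:ℂ) (n+1) ((q:ℂ) * b)
      - b * (q:ℂ) * (1 - (q:ℂ) ^ (-((n:ℤ)+1))) * Vfun (q:ℂ) n ((q:ℂ) * b) := by
  have hqc : (q : ℂ) ≠ 0 := by exact_mod_cast hq₁.ne'
  rw [eq_sub_iff_add_eq, Vfun, Vfun, Vfun]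
  push_cast
  rw [Finset.sum_range_succ' (fun k => qp (q:ℂ) ((q:ℂ) ^ (-((n:ℕ)+1:ℤ))) k * qp (q:ℂ) ((q:ℂ)*b) k * (q:ℂ) ^ k / qp (q:ℂ) (q:ℂ) k) (n+1),
      Finset.sum_range_succ' (fun k => qp (q:ℂ) ((q:ℂ) ^ (-((n:ℕ)+1:ℤ))) k * qp (q:ℂ) b k * (q:ℂ) ^ k / qp (q:ℂ) (q:ℂ) k) (n+1)]
  rw [mul_comm (b * (q:ℂ) * (1 - (q:ℂ) ^ (-((n:ℤ)+1)))), Finset.sum_mul]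
  rw [add_right_comm, ← Finset.sum_add_distrib]
  congr 1
  apply Finset.sum_congr rfl
  intro j _
  rw [mul_comm _ (b * (q:ℂ) * (1 - (q:ℂ) ^ (-((n:ℤ)+1))))]
  -- pointwise identity for the `k = j+1` terms
  have hA : qp (q:ℂ) ((q:ℂ) ^ (-((n:ℕ)+1:ℤ))) (j+1)
      = (1 - (q:ℂ) ^ (-((n:ℕ)+1:ℤ))) * qp (q:ℂ) ((q:ℂ) ^ (-(n:ℤ))) j := by
    rw [qp_succ']
    congr 2
    have e : (q:ℂ) ^ (-((n:ℤ)+1)) * (q:ℂ) ^ (1:ℤ) = (q:ℂ) ^ (-(n:ℤ)) := by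
      rw [← zpow_add₀ hqc]; norm_num
    simpa using e
  have hb1 : qp (q:ℂ) b (j+1) = (1 - b) * qp (q:ℂ) (b * (q:ℂ)) j := qp_succ' _ _ _
  have hb2 : qp (q:ℂ) ((q:ℂ)*b) (j+1) = qp (q:ℂ) ((q:ℂ)*b) j * (1 - (q:ℂ)*b*(q:ℂ)^j) :=
    qp_succ _ _ _
  have hq3 : qp (q:ℂ) (q:ℂ) (j+1) = qp (q:ℂ) (q:ℂ) j * (1 - (q:ℂ)^(j+1)) := by
    rw [qp_succ]; ring_nf
  have hbq : b * (q:ℂ) = (q:ℂ) * b := mul_comm _ _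
  rw [hA, hb1, hb2, hq3, hbq]
  have h1 : qp (q:ℂ) (q:ℂ) j ≠ 0 := qq_ne_zero hq₁ hq₂ j
  have h2 : (1 : ℂ) - (q:ℂ)^(j+1) ≠ 0 := one_sub_qpow_ne hq₁ hq₂ (j+1) (Nat.succ_ne_zero j)
  field_simp
  ring
end ASCAux

namespace ASCAux

lemma Vfun_zero (q b : ℂ) : Vfun q 0 b = 1 := by
  simp [Vfun, qp_zero]

lemma Vfun_one {q : ℝ} (hq₁ : 0 < q) (hq₂ : q < 1) (n : ℕ) : Vfun (q:ℂ) n 1 = 1 := by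
  rw [Vfun, Finset.sum_eq_single 0]
  · simp [qp_zero]
  · intro k _ hk
    rw [qp_one _ k hk]
    simp
  · intro h; simp at h

lemma V_eq {q : ℝ} (hq₁ : 0 < q) (hq₂ : q < 1) (n : ℕ) (b : ℂ) :
    Vfun (q:ℂ) n b = b ^ n := by
  induction n generalizing b with
  | zero => simp [Vfun_zero]
  | succ n ih =>
    have hqc : (q:ℂ) ≠ 0 := by exact_mod_cast hq₁.ne'
    set E : ℂ → ℂ := fun b => Vfun (q:ℂ) (n+1) b - b ^ (n+1) with hE
    have hcont : Continuous E := (continuous_Vfun _ _).sub (continuous_pow _)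
    have hper : ∀ z : ℂ, E z = E ((q:ℂ) * z) := by
      intro z
      have h1 := V_contig hq₁ hq₂ n z
      have h2 : ((q:ℂ)) ^ (-((n:ℤ)+1)) * (q:ℂ) ^ ((n:ℤ)+1) = 1 := by
        rw [← zpow_add₀ hqc, show (-((n:ℤ)+1) + ((n:ℤ)+1)) = 0 by ring, zpow_zero]
      have h3 : ((q:ℂ)) ^ ((n:ℤ)+1) = (q:ℂ) ^ ((n:ℕ)+1) := by
        rw [← zpow_natCast]; norm_num
      simp only [hE, h1, ih]
      have : z * (q:ℂ) * (1 - (q:ℂ) ^ (-((n:ℤ)+1))) * ((q:ℂ)*z) ^ n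
          = z^(n+1) * (q:ℂ)^((n:ℤ)+1) * (1 - (q:ℂ) ^ (-((n:ℤ)+1))) := by
        rw [mul_pow, h3]; ring
      rw [this]
      have h4 : z^(n+1) * (q:ℂ)^((n:ℤ)+1) * (1 - (q:ℂ) ^ (-((n:ℤ)+1)))
          = z^(n+1) * ((q:ℂ)^((n:ℤ)+1) - 1) := by
        linear_combination (-(z^(n+1))) * h2
      rw [h4, mul_pow, h3]
      ring
    have := qRigid hq₁ hq₂ hcont hper b 1
    have hval : E 1 = 0 := by simp [hE, Vfun_one hq₁ hq₂]
    have : E b = 0 := by rw [this, hval]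
    have := this
    simp only [hE] at this
    linear_combination this
end ASCAux

namespace ASCAux

lemma qp_arg (q : ℂ) {a b : ℂ} (h : a = b) (n : ℕ) : qp q a n = qp q b n := by rw [h]

/-- Cauchy-product coefficient function. -/
noncomputable def Lfun (q u t₁ : ℂ) (n : ℕ) (s : ℂ) : ℂ :=
  ∑ j ∈ Finset.range (n + 1),
    qp q (t₁ * u⁻¹) j * qp q (s * u) (n - j) * u ^ j * (u⁻¹) ^ (n - j)
      / (qp q q j * qp q q (n - j))

/-- Numerator of the `₃φ₂` side. -/
noncomputable def Rsum (q u t₁ : ℂ) (n : ℕ) (s : ℂ) : ℂ :=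
  ∑ k ∈ Finset.range (n + 1),
    qp q (q ^ (-(n : ℤ))) k * qp q (t₁ * u) k * qp q (t₁ * u⁻¹) k * q ^ k
      * qp q (t₁ * s * q ^ k) (n - k) / qp q q k

noncomputable def Rfun (q u t₁ : ℂ) (n : ℕ) (s : ℂ) : ℂ :=
  Rsum q u t₁ n s / (qp q q n * t₁ ^ n)

lemma continuous_Lfun (q u t₁ : ℂ) (n : ℕ) : Continuous fun s => Lfun q u t₁ n s := by
  unfold Lfun
  apply continuous_finset_sum
  intro j _
  apply Continuous.div_const
  exact ((continuous_const.mul (continuous_qp_comp (continuous_id.mul continuous_const) _)).mul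
    continuous_const).mul continuous_const

lemma continuous_Rfun (q u t₁ : ℂ) (n : ℕ) : Continuous fun s => Rfun q u t₁ n s := by
  unfold Rfun Rsum
  apply Continuous.div_const
  apply continuous_finset_sum
  intro k _
  apply Continuous.div_const
  exact continuous_const.mul
    (continuous_qp_comp ((continuous_const.mul continuous_id).mul continuous_const) _)

lemma L_contig {q : ℝ} (hq₁ : 0 < q) (hq₂ : q < 1) {u : ℂ} (hu : u ≠ 0) (t₁ : ℂ) (n : ℕ)
    (s : ℂ) :
    Lfun (q:ℂ) u t₁ (n+1) s
      = Lfun (q:ℂ) u t₁ (n+1) ((q:ℂ) * s) - s * Lfun (q:ℂ) u t₁ n ((q:ℂ) * s) := by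
  rw [eq_sub_iff_add_eq]
  unfold Lfun
  rw [Finset.mul_sum, Finset.sum_range_succ
    (fun j => qp (q:ℂ) (t₁ * u⁻¹) j * qp (q:ℂ) (s * u) (n + 1 - j) * u ^ j * (u⁻¹) ^ (n + 1 - j)
      / (qp (q:ℂ) (q:ℂ) j * qp (q:ℂ) (q:ℂ) (n + 1 - j))),
    Finset.sum_range_succ
    (fun j => qp (q:ℂ) (t₁ * u⁻¹) j * qp (q:ℂ) ((q:ℂ) * s * u) (n + 1 - j) * u ^ j
      * (u⁻¹) ^ (n + 1 - j) / (qp (q:ℂ) (q:ℂ) j * qp (q:ℂ) (q:ℂ) (n + 1 - j)))]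
  rw [add_right_comm, ← Finset.sum_add_distrib]
  congr 1
  · apply Finset.sum_congr rfl
    intro j hj
    have hjn : j ≤ n := by simpa [Nat.lt_succ_iff] using hj
    have hm : n + 1 - j = (n - j) + 1 := by omega
    have h1 : qp (q:ℂ) (q:ℂ) j ≠ 0 := qq_ne_zero hq₁ hq₂ j
    have h2 : qp (q:ℂ) (q:ℂ) (n-j) ≠ 0 := qq_ne_zero hq₁ hq₂ (n-j)
    have h3 : (1:ℂ) - (q:ℂ) * (q:ℂ) ^ (n-j) ≠ 0 := by
      have := one_sub_qpow_ne hq₁ hq₂ (n-j+1) (Nat.succ_ne_zero _)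
      rw [pow_succ] at this
      simpa [mul_comm] using this
    have huu : u * u⁻¹ = 1 := mul_inv_cancel₀ hu
    have hP1 : qp (q:ℂ) (s*u) ((n-j)+1) = (1 - s*u) * qp (q:ℂ) ((q:ℂ)*s*u) (n-j) := by
      rw [qp_succ']
      congr 1
      exact qp_arg _ (by ring) (n-j)
    have hP2 : qp (q:ℂ) ((q:ℂ)*s*u) ((n-j)+1)
        = qp (q:ℂ) ((q:ℂ)*s*u) (n-j) * (1 - (q:ℂ)*s*u*(q:ℂ)^(n-j)) := qp_succ _ _ _
    have hq3 : qp (q:ℂ) (q:ℂ) ((n-j)+1)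
        = qp (q:ℂ) (q:ℂ) (n-j) * (1 - (q:ℂ)*(q:ℂ)^(n-j)) := by
      rw [qp_succ]
    rw [hm, hP1, hP2, hq3, pow_succ]
    rw [show qp (q:ℂ) (q:ℂ) j * (qp (q:ℂ) (q:ℂ) (n-j) * (1 - (q:ℂ)*(q:ℂ)^(n-j)))
        = (qp (q:ℂ) (q:ℂ) j * qp (q:ℂ) (q:ℂ) (n-j)) * (1 - (q:ℂ)*(q:ℂ)^(n-j)) by ring]
    rw [← mul_div_assoc]
    rw [← mul_div_mul_right (s * (qp (q:ℂ) (t₁ * u⁻¹) j * qp (q:ℂ) ((q:ℂ)*s*u) (n-j) * u ^ j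
        * (u⁻¹) ^ (n-j))) (qp (q:ℂ) (q:ℂ) j * qp (q:ℂ) (q:ℂ) (n-j)) h3]
    rw [← add_div]
    congr 1
    linear_combination (-(qp (q:ℂ) (t₁ * u⁻¹) j * qp (q:ℂ) ((q:ℂ)*s*u) (n-j) * u ^ j
      * (u⁻¹) ^ (n-j) * s * (1 - (q:ℂ)*(q:ℂ)^(n-j)))) * huu
  · simp [qp_zero]

lemma R_term_contig {q : ℝ} (hq₁ : 0 < q) (hq₂ : q < 1) (u t₁ : ℂ) (n : ℕ) (s : ℂ)
    (k : ℕ) (hk : k ≤ n) :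
    qp (q:ℂ) ((q:ℂ) ^ (-((n:ℤ)+1))) k * qp (q:ℂ) (t₁ * u) k * qp (q:ℂ) (t₁ * u⁻¹) k * (q:ℂ) ^ k
      * qp (q:ℂ) (t₁ * s * (q:ℂ) ^ k) (n + 1 - k) / qp (q:ℂ) (q:ℂ) k
    + s * (1 - (q:ℂ)^(n+1)) * t₁ *
      (qp (q:ℂ) ((q:ℂ) ^ (-(n:ℤ))) k * qp (q:ℂ) (t₁ * u) k * qp (q:ℂ) (t₁ * u⁻¹) k * (q:ℂ) ^ k
        * qp (q:ℂ) (t₁ * ((q:ℂ) * s) * (q:ℂ) ^ k) (n - k) / qp (q:ℂ) (q:ℂ) k)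
    = qp (q:ℂ) ((q:ℂ) ^ (-((n:ℤ)+1))) k * qp (q:ℂ) (t₁ * u) k * qp (q:ℂ) (t₁ * u⁻¹) k * (q:ℂ) ^ k
      * qp (q:ℂ) (t₁ * ((q:ℂ) * s) * (q:ℂ) ^ k) (n + 1 - k) / qp (q:ℂ) (q:ℂ) k := by
  have hqc : (q:ℂ) ≠ 0 := by exact_mod_cast hq₁.ne'
  have hm : n + 1 - k = (n - k) + 1 := by omega
  have sid := scalar_id hqc ((n:ℤ)+1) k
  have e1 : ((q:ℂ)) ^ (k:ℤ) = (q:ℂ) ^ k := zpow_natCast _ _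
  have e2 : ((q:ℂ)) ^ ((n:ℤ)+1) = (q:ℂ) ^ (n+1) := by
    rw [show ((n:ℤ)+1) = ((n+1:ℕ):ℤ) by push_cast; ring, zpow_natCast]
  have e3 : (1:ℤ) - ((n:ℤ)+1) = -(n:ℤ) := by ring
  rw [e1, e2, e3] at sid
  -- expand the products in `s` and `q*s`
  rw [hm]
  rw [qp_succ' (q:ℂ) (t₁ * s * (q:ℂ)^k) (n-k)]
  rw [qp_arg (q:ℂ) (show t₁ * s * (q:ℂ)^k * (q:ℂ) = t₁ * ((q:ℂ) * s) * (q:ℂ)^k by ring) (n-k)]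
  rw [qp_succ (q:ℂ) (t₁ * ((q:ℂ) * s) * (q:ℂ)^k) (n-k)]
  have hx : t₁ * ((q:ℂ) * s) * (q:ℂ) ^ k * (q:ℂ) ^ (n-k) = t₁ * s * (q:ℂ)^(n+1) := by
    have : (q:ℂ) * ((q:ℂ) ^ k * (q:ℂ) ^ (n-k)) = (q:ℂ)^(n+1) := by
      rw [← pow_add, ← pow_succ']
      congr 1
      omega
    linear_combination t₁ * s * this
  rw [hx]
  rw [← mul_div_assoc, ← add_div]
  congr 1
  linear_combination (-(s * t₁ * qp (q:ℂ) (t₁ * u) k * qp (q:ℂ) (t₁ * u⁻¹) k * (q:ℂ) ^ k *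
    qp (q:ℂ) (t₁ * ((q:ℂ) * s) * (q:ℂ) ^ k) (n-k))) * sid

lemma Rsum_contig {q : ℝ} (hq₁ : 0 < q) (hq₂ : q < 1) (u t₁ : ℂ) (n : ℕ) (s : ℂ) :
    Rsum (q:ℂ) u t₁ (n+1) s
      = Rsum (q:ℂ) u t₁ (n+1) ((q:ℂ) * s)
        - s * (1 - (q:ℂ)^(n+1)) * t₁ * Rsum (q:ℂ) u t₁ n ((q:ℂ) * s) := by
  rw [eq_sub_iff_add_eq]
  unfold Rsum
  have ecast : (-((n:ℕ)+1:ℕ):ℤ) = -((n:ℤ)+1) := by push_cast; ring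
  rw [Finset.mul_sum, Finset.sum_range_succ
    (fun k => qp (q:ℂ) ((q:ℂ) ^ (-((n+1:ℕ):ℤ))) k * qp (q:ℂ) (t₁ * u) k * qp (q:ℂ) (t₁ * u⁻¹) k
      * (q:ℂ) ^ k * qp (q:ℂ) (t₁ * s * (q:ℂ) ^ k) (n + 1 - k) / qp (q:ℂ) (q:ℂ) k),
    Finset.sum_range_succ
    (fun k => qp (q:ℂ) ((q:ℂ) ^ (-((n+1:ℕ):ℤ))) k * qp (q:ℂ) (t₁ * u) k * qp (q:ℂ) (t₁ * u⁻¹) k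
      * (q:ℂ) ^ k * qp (q:ℂ) (t₁ * ((q:ℂ) * s) * (q:ℂ) ^ k) (n + 1 - k) / qp (q:ℂ) (q:ℂ) k)]
  rw [add_right_comm, ← Finset.sum_add_distrib]
  congr 1
  · apply Finset.sum_congr rfl
    intro k hk
    have hkn : k ≤ n := by simpa [Nat.lt_succ_iff] using hk
    have := R_term_contig hq₁ hq₂ u t₁ n s k hkn
    rw [show (-((n+1:ℕ):ℤ)) = -((n:ℤ)+1) by push_cast; ring]
    linear_combination this
  · simp [qp_zero]

lemma R_contig {q : ℝ} (hq₁ : 0 < q) (hq₂ : q < 1) (u : ℂ) {t₁ : ℂ} (ht₁ : t₁ ≠ 0) (n : ℕ)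
    (s : ℂ) :
    Rfun (q:ℂ) u t₁ (n+1) s
      = Rfun (q:ℂ) u t₁ (n+1) ((q:ℂ) * s) - s * Rfun (q:ℂ) u t₁ n ((q:ℂ) * s) := by
  unfold Rfun
  rw [Rsum_contig hq₁ hq₂ u t₁ n s]
  have h1 : qp (q:ℂ) (q:ℂ) n ≠ 0 := qq_ne_zero hq₁ hq₂ n
  have h2 : (1:ℂ) - (q:ℂ)^(n+1) ≠ 0 := one_sub_qpow_ne hq₁ hq₂ (n+1) (Nat.succ_ne_zero _)
  have h3 : qp (q:ℂ) (q:ℂ) (n+1) = qp (q:ℂ) (q:ℂ) n * (1 - (q:ℂ)^(n+1)) := by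
    rw [qp_succ]; ring_nf
  rw [h3]
  field_simp
  ring

end ASCAux

namespace ASCAux

lemma anchor {q : ℝ} (hq₁ : 0 < q) (hq₂ : q < 1) {u t₁ : ℂ} (hu : u ≠ 0) (ht₁ : t₁ ≠ 0)
    (n : ℕ) : Lfun (q:ℂ) u t₁ n u⁻¹ = Rfun (q:ℂ) u t₁ n u⁻¹ := by
  have hqn : qp (q:ℂ) (q:ℂ) n ≠ 0 := qq_ne_zero hq₁ hq₂ n
  have hL : Lfun (q:ℂ) u t₁ n u⁻¹ = qp (q:ℂ) (t₁ * u⁻¹) n * u ^ n / qp (q:ℂ) (q:ℂ) n := by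
    unfold Lfun
    rw [Finset.sum_eq_single n]
    · simp [qp_zero]
    · intro j hj hjn
      have hjlt : j < n + 1 := Finset.mem_range.mp hj
      have h0 : qp (q:ℂ) (u⁻¹ * u) (n - j) = 0 := by
        rw [qp_arg (q:ℂ) (inv_mul_cancel₀ hu) (n-j), qp_one]
        omega
      rw [h0]
      ring
    · intro h
      exact absurd (Finset.self_mem_range_succ n) h
  have hR : Rsum (q:ℂ) u t₁ n u⁻¹ = qp (q:ℂ) (t₁ * u⁻¹) n * (t₁ * u) ^ n := by
    unfold Rsum
    have : ∀ k ∈ Finset.range (n+1),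
        qp (q:ℂ) ((q:ℂ) ^ (-(n:ℤ))) k * qp (q:ℂ) (t₁ * u) k * qp (q:ℂ) (t₁ * u⁻¹) k * (q:ℂ) ^ k
          * qp (q:ℂ) (t₁ * u⁻¹ * (q:ℂ) ^ k) (n - k) / qp (q:ℂ) (q:ℂ) k
        = qp (q:ℂ) (t₁ * u⁻¹) n *
          (qp (q:ℂ) ((q:ℂ) ^ (-(n:ℤ))) k * qp (q:ℂ) (t₁ * u) k * (q:ℂ) ^ k / qp (q:ℂ) (q:ℂ) k) := by
      intro k hk
      have hkn : k ≤ n := by simpa [Nat.lt_succ_iff] using hk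
      have hsplit : qp (q:ℂ) (t₁ * u⁻¹) n
          = qp (q:ℂ) (t₁ * u⁻¹) k * qp (q:ℂ) (t₁ * u⁻¹ * (q:ℂ) ^ k) (n - k) := by
        rw [← qp_add]
        congr 1
        omega
      rw [hsplit]
      ring
    rw [Finset.sum_congr rfl this, ← Finset.mul_sum]
    congr 1
    exact V_eq hq₁ hq₂ n (t₁ * u)
  rw [hL, Rfun, hR]
  rw [mul_pow]
  field_simp

lemma crux {q : ℝ} (hq₁ : 0 < q) (hq₂ : q < 1) {u t₁ : ℂ} (hu : u ≠ 0) (ht₁ : t₁ ≠ 0)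
    (n : ℕ) (s : ℂ) : Lfun (q:ℂ) u t₁ n s = Rfun (q:ℂ) u t₁ n s := by
  induction n generalizing s with
  | zero => simp [Lfun, Rfun, Rsum, qp_zero]
  | succ n ih =>
    set D : ℂ → ℂ := fun s => Lfun (q:ℂ) u t₁ (n+1) s - Rfun (q:ℂ) u t₁ (n+1) s with hD
    have hcont : Continuous D := (continuous_Lfun _ _ _ _).sub (continuous_Rfun _ _ _ _)
    have hper : ∀ z : ℂ, D z = D ((q:ℂ) * z) := by
      intro z
      simp only [hD, L_contig hq₁ hq₂ hu t₁ n z, R_contig hq₁ hq₂ u ht₁ n z, ih ((q:ℂ)*z)]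
      ring
    have h1 : D s = D u⁻¹ := qRigid hq₁ hq₂ hcont hper s u⁻¹
    have h2 : D u⁻¹ = 0 := by
      simp only [hD]
      rw [anchor hq₁ hq₂ hu ht₁ (n+1), sub_self]
    have : D s = 0 := h1.trans h2
    simpa [hD, sub_eq_zero] using this

end ASCAux

namespace ASCAux

open Filter

lemma norm_q {q : ℝ} (hq₁ : 0 < q) (hq₂ : q < 1) : ‖(q:ℂ)‖ < 1 := by
  rw [Complex.norm_real, Real.norm_eq_abs, abs_of_pos hq₁]; exact hq₂

lemma geom_partial_le {q : ℝ} (hq₁ : 0 < q) (hq₂ : q < 1) (n : ℕ) :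
    ∑ k ∈ Finset.range n, q ^ k ≤ (1 - q)⁻¹ := by
  have hs := summable_geometric_of_lt_one hq₁.le hq₂
  calc ∑ k ∈ Finset.range n, q ^ k ≤ ∑' k : ℕ, q ^ k :=
        Summable.sum_le_tsum _ (fun i _ => by positivity) hs
    _ = (1 - q)⁻¹ := tsum_geometric_of_lt_one hq₁.le hq₂

lemma norm_qp_le {q : ℝ} (hq₁ : 0 < q) (hq₂ : q < 1) (a : ℂ) (n : ℕ) :
    ‖qp (q:ℂ) a n‖ ≤ Real.exp (‖a‖ * (1 - q)⁻¹) := by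
  rw [qp, norm_prod]
  calc ∏ k ∈ Finset.range n, ‖1 - a * (q:ℂ)^k‖
      ≤ ∏ k ∈ Finset.range n, Real.exp (‖a‖ * q^k) := by
        apply Finset.prod_le_prod (fun k _ => norm_nonneg _)
        intro k _
        have h1 : ‖1 - a * (q:ℂ)^k‖ ≤ 1 + ‖a‖ * q^k := by
          calc ‖1 - a * (q:ℂ)^k‖ ≤ ‖(1:ℂ)‖ + ‖a * (q:ℂ)^k‖ := norm_sub_le _ _
            _ = 1 + ‖a‖ * q^k := by
                rw [norm_one, norm_mul, norm_pow, Complex.norm_real, Real.norm_eq_abs,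
                  abs_of_pos hq₁]
        calc ‖1 - a * (q:ℂ)^k‖ ≤ 1 + ‖a‖ * q^k := h1
          _ ≤ Real.exp (‖a‖ * q^k) := by
              have := Real.add_one_le_exp (‖a‖ * q^k); linarith
    _ = Real.exp (∑ k ∈ Finset.range n, ‖a‖ * q^k) := (Real.exp_sum _ _).symm
    _ ≤ Real.exp (‖a‖ * (1 - q)⁻¹) := by
        apply Real.exp_le_exp.mpr
        rw [← Finset.mul_sum]
        apply mul_le_mul_of_nonneg_left (geom_partial_le hq₁ hq₂ n) (norm_nonneg a)

lemma one_sub_ge_exp {q x : ℝ} (hq₁ : 0 < q) (hq₂ : q < 1) (hx0 : 0 ≤ x) (hxq : x ≤ q) :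
    Real.exp (-(x * (1 - q)⁻¹)) ≤ 1 - x := by
  have hq3 : 0 < 1 - q := by linarith
  have hg : (1 - q) * (1 - q)⁻¹ = 1 := mul_inv_cancel₀ hq3.ne'
  have key : 1 ≤ (1 - x) * Real.exp (x * (1 - q)⁻¹) := by
    have h := Real.add_one_le_exp (x * (1 - q)⁻¹)
    have h2 : (1 - x) * (x * (1 - q)⁻¹ + 1) ≥ 1 := by
      have hinv : (0:ℝ) < (1 - q)⁻¹ := by positivity
      nlinarith [mul_nonneg hx0 hinv.le]
    nlinarith [Real.exp_pos (x * (1 - q)⁻¹)]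
  rw [Real.exp_neg]
  rw [inv_le_iff_one_le_mul₀' (Real.exp_pos _)] at *
  nlinarith [Real.exp_pos (x * (1 - q)⁻¹)]

lemma qp_q_real {q : ℝ} (n : ℕ) :
    qp (q:ℂ) (q:ℂ) n = ((∏ k ∈ Finset.range n, (1 - q ^ (k+1)) : ℝ) : ℂ) := by
  rw [qp]
  push_cast
  apply Finset.prod_congr rfl
  intro k _
  rw [pow_succ']

lemma norm_qp_q_ge {q : ℝ} (hq₁ : 0 < q) (hq₂ : q < 1) (n : ℕ) :
    Real.exp (-(q * ((1 - q)⁻¹ * (1 - q)⁻¹))) ≤ ‖qp (q:ℂ) (q:ℂ) n‖ := by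
  rw [qp_q_real, Complex.norm_real, Real.norm_eq_abs]
  have hpos : ∀ k, (0:ℝ) < 1 - q ^ (k+1) := by
    intro k
    have : q ^ (k+1) < 1 := pow_lt_one₀ hq₁.le hq₂ (Nat.succ_ne_zero k)
    linarith
  have hprodpos : (0:ℝ) < ∏ k ∈ Finset.range n, (1 - q ^ (k+1)) :=
    Finset.prod_pos fun k _ => hpos k
  rw [abs_of_pos hprodpos]
  calc Real.exp (-(q * ((1 - q)⁻¹ * (1 - q)⁻¹)))
      ≤ Real.exp (-((∑ k ∈ Finset.range n, q^(k+1)) * (1 - q)⁻¹)) := by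
        apply Real.exp_le_exp.mpr
        rw [neg_le_neg_iff, show q * ((1-q)⁻¹*(1-q)⁻¹) = (q*(1-q)⁻¹)*(1-q)⁻¹ by ring]
        apply mul_le_mul_of_nonneg_right _ (inv_nonneg.mpr (by linarith))
        calc ∑ k ∈ Finset.range n, q^(k+1) = q * ∑ k ∈ Finset.range n, q^k := by
              rw [Finset.mul_sum]; exact Finset.sum_congr rfl fun k _ => (pow_succ' q k)
          _ ≤ q * (1-q)⁻¹ := mul_le_mul_of_nonneg_left (geom_partial_le hq₁ hq₂ n) hq₁.le
    _ = ∏ k ∈ Finset.range n, Real.exp (-(q^(k+1) * (1-q)⁻¹)) := by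
        rw [← Real.exp_sum]
        congr 1
        rw [Finset.sum_mul, ← Finset.sum_neg_distrib]
    _ ≤ ∏ k ∈ Finset.range n, (1 - q^(k+1)) := by
        apply Finset.prod_le_prod (fun k _ => (Real.exp_pos _).le)
        intro k _
        apply one_sub_ge_exp hq₁ hq₂ (pow_nonneg hq₁.le _)
        calc q^(k+1) ≤ q^1 := pow_le_pow_of_le_one hq₁.le hq₂.le (by omega)
          _ = q := pow_one q

/-- Uniform constant bounding `‖(a;q)_n / (q;q)_n‖`. -/
noncomputable def qK (q : ℝ) (a : ℂ) : ℝ :=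
  Real.exp (‖a‖ * (1 - q)⁻¹) * Real.exp (q * ((1 - q)⁻¹ * (1 - q)⁻¹))

lemma qK_pos (q : ℝ) (a : ℂ) : 0 < qK q a := by unfold qK; positivity

lemma norm_qterm_le {q : ℝ} (hq₁ : 0 < q) (hq₂ : q < 1) (a z : ℂ) (n : ℕ) :
    ‖qp (q:ℂ) a n * z^n / qp (q:ℂ) (q:ℂ) n‖ ≤ qK q a * ‖z‖^n := by
  rw [norm_div, norm_mul, norm_pow]
  have h1 := norm_qp_le hq₁ hq₂ a n
  have h2 := norm_qp_q_ge hq₁ hq₂ n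
  have h3 : (0:ℝ) < Real.exp (-(q * ((1 - q)⁻¹ * (1 - q)⁻¹))) := Real.exp_pos _
  have h4 : 0 < ‖qp (q:ℂ) (q:ℂ) n‖ := lt_of_lt_of_le h3 h2
  rw [div_le_iff₀ h4]
  calc ‖qp (q:ℂ) a n‖ * ‖z‖^n ≤ Real.exp (‖a‖ * (1 - q)⁻¹) * ‖z‖^n :=
        mul_le_mul_of_nonneg_right h1 (by positivity)
    _ = qK q a * ‖z‖^n * Real.exp (-(q * ((1 - q)⁻¹ * (1 - q)⁻¹))) := by
        rw [qK, Real.exp_neg]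
        field_simp
    _ ≤ qK q a * ‖z‖^n * ‖qp (q:ℂ) (q:ℂ) n‖ := by
        apply mul_le_mul_of_nonneg_left h2 (mul_nonneg (qK_pos _ _).le (by positivity))

lemma summable_norm_qterm {q : ℝ} (hq₁ : 0 < q) (hq₂ : q < 1) (a : ℂ) {z : ℂ} (hz : ‖z‖ < 1) :
    Summable (fun n => ‖qp (q:ℂ) a n * z^n / qp (q:ℂ) (q:ℂ) n‖) := by
  apply Summable.of_nonneg_of_le (fun n => norm_nonneg _) (norm_qterm_le hq₁ hq₂ a z)
  exact (summable_geometric_of_lt_one (norm_nonneg z) hz).mul_left _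

lemma summable_qterm {q : ℝ} (hq₁ : 0 < q) (hq₂ : q < 1) (a : ℂ) {z : ℂ} (hz : ‖z‖ < 1) :
    Summable (fun n => qp (q:ℂ) a n * z^n / qp (q:ℂ) (q:ℂ) n) :=
  (summable_norm_qterm hq₁ hq₂ a hz).of_norm

/-- The partial `q`-binomial sum function. -/
noncomputable def qS (q a z : ℂ) : ℂ := ∑' n : ℕ, qp q a n * z^n / qp q q n

lemma hasSum_qS {q : ℝ} (hq₁ : 0 < q) (hq₂ : q < 1) (a : ℂ) {z : ℂ} (hz : ‖z‖ < 1) :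
    HasSum (fun n => qp (q:ℂ) a n * z^n / qp (q:ℂ) (q:ℂ) n) (qS (q:ℂ) a z) :=
  (summable_qterm hq₁ hq₂ a hz).hasSum

end ASCAux

namespace ASCAux

open Filter

lemma norm_qmul_lt {q : ℝ} (hq₁ : 0 < q) (hq₂ : q < 1) {z : ℂ} (hz : ‖z‖ < 1) :
    ‖(q:ℂ) * z‖ < 1 := by
  rw [norm_mul]
  calc ‖(q:ℂ)‖ * ‖z‖ ≤ 1 * ‖z‖ := by
        apply mul_le_mul_of_nonneg_right (norm_q hq₁ hq₂).le (norm_nonneg z)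
    _ = ‖z‖ := one_mul _
    _ < 1 := hz

lemma norm_qpow_mul_lt {q : ℝ} (hq₁ : 0 < q) (hq₂ : q < 1) {z : ℂ} (hz : ‖z‖ < 1) (N : ℕ) :
    ‖(q:ℂ)^N * z‖ < 1 := by
  induction N with
  | zero => simpa using hz
  | succ n ih =>
    have : (q:ℂ)^(n+1) * z = (q:ℂ) * ((q:ℂ)^n * z) := by ring
    rw [this]
    exact norm_qmul_lt hq₁ hq₂ ih

/-- The functional equation `(1-z) S(z) = (1-az) S(qz)`. -/
lemma qS_feq {q : ℝ} (hq₁ : 0 < q) (hq₂ : q < 1) (a : ℂ) {z : ℂ} (hz : ‖z‖ < 1) :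
    (1 - z) * qS (q:ℂ) a z = (1 - a * z) * qS (q:ℂ) a ((q:ℂ) * z) := by
  have hz' : ‖(q:ℂ) * z‖ < 1 := norm_qmul_lt hq₁ hq₂ hz
  have hA := hasSum_qS hq₁ hq₂ a hz
  have hB := hasSum_qS hq₁ hq₂ a hz'
  -- shifted versions
  set g : ℕ → ℂ := fun n => match n with
    | 0 => 0
    | (m+1) => qp (q:ℂ) a m * z^m / qp (q:ℂ) (q:ℂ) m * z with hgdef
  set h : ℕ → ℂ := fun n => match n with
    | 0 => 0
    | (m+1) => qp (q:ℂ) a m * ((q:ℂ)*z)^m / qp (q:ℂ) (q:ℂ) m * (a * z) with hhdef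
  have hg : HasSum g (qS (q:ℂ) a z * z) := by
    have h1 : HasSum (fun n => g (n+1)) (qS (q:ℂ) a z * z) := hA.mul_right z
    have := (hasSum_nat_add_iff (f := g) 1).mp h1
    simpa [hgdef, hhdef] using this
  have hh : HasSum h (qS (q:ℂ) a ((q:ℂ)*z) * (a * z)) := by
    have h1 : HasSum (fun n => h (n+1)) (qS (q:ℂ) a ((q:ℂ)*z) * (a * z)) := hB.mul_right _
    have := (hasSum_nat_add_iff (f := h) 1).mp h1
    simpa [hgdef, hhdef] using this
  have hL := hA.sub hg
  have hR := hB.sub hh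
  have hpt : ∀ n, (qp (q:ℂ) a n * z^n / qp (q:ℂ) (q:ℂ) n) - g n
      = (qp (q:ℂ) a n * ((q:ℂ)*z)^n / qp (q:ℂ) (q:ℂ) n) - h n := by
    intro n
    match n with
    | 0 => simp [hgdef, hhdef, qp_zero]
    | (m+1) =>
      simp only [hgdef, hhdef]
      have e1 : qp (q:ℂ) a (m+1) = qp (q:ℂ) a m * (1 - a*(q:ℂ)^m) := qp_succ _ _ _
      have e2 : qp (q:ℂ) (q:ℂ) (m+1) = qp (q:ℂ) (q:ℂ) m * (1 - (q:ℂ)^(m+1)) := by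
        rw [qp_succ, pow_succ']
      have h1 : qp (q:ℂ) (q:ℂ) m ≠ 0 := qq_ne_zero hq₁ hq₂ m
      have h2 : (1:ℂ) - (q:ℂ)^(m+1) ≠ 0 := one_sub_qpow_ne hq₁ hq₂ (m+1) (Nat.succ_ne_zero _)
      rw [e1, e2]
      field_simp
      ring
    
  have hR' : HasSum (fun n => (qp (q:ℂ) a n * z^n / qp (q:ℂ) (q:ℂ) n) - g n)
      (qS (q:ℂ) a ((q:ℂ)*z) - qS (q:ℂ) a ((q:ℂ)*z) * (a*z)) := by
    exact hR.congr_fun fun n => hpt n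
  have := hL.unique hR'
  linear_combination this

/-- Iterated functional equation. -/
lemma qS_iterate {q : ℝ} (hq₁ : 0 < q) (hq₂ : q < 1) (a : ℂ) {z : ℂ} (hz : ‖z‖ < 1) (N : ℕ) :
    qS (q:ℂ) a z * qp (q:ℂ) z N = qp (q:ℂ) (a*z) N * qS (q:ℂ) a ((q:ℂ)^N * z) := by
  induction N with
  | zero => simp [qp_zero]
  | succ n ih =>
    rw [qp_succ, qp_succ, ← mul_assoc, ih]
    have hzn : ‖(q:ℂ)^n * z‖ < 1 := norm_qpow_mul_lt hq₁ hq₂ hz n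
    have hfeq := qS_feq hq₁ hq₂ a hzn
    have e1 : (q:ℂ) * ((q:ℂ)^n * z) = (q:ℂ)^(n+1) * z := by ring
    have e2 : a * ((q:ℂ)^n * z) = a * z * (q:ℂ)^n := by ring
    have e3 : (1:ℂ) - (q:ℂ)^n * z = 1 - z * (q:ℂ)^n := by ring
    rw [e1, e2, e3] at hfeq
    calc qp (q:ℂ) (a*z) n * qS (q:ℂ) a ((q:ℂ)^n * z) * (1 - z * (q:ℂ)^n)
        = qp (q:ℂ) (a*z) n * ((1 - z * (q:ℂ)^n) * qS (q:ℂ) a ((q:ℂ)^n * z)) := by ring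
      _ = qp (q:ℂ) (a*z) n * ((1 - a * z * (q:ℂ)^n) * qS (q:ℂ) a ((q:ℂ)^(n+1) * z)) := by
          rw [hfeq]
      _ = qp (q:ℂ) (a*z) n * (1 - a * z * (q:ℂ)^n) * qS (q:ℂ) a ((q:ℂ)^(n+1) * z) := by ring

end ASCAux

namespace ASCAux

open Filter

/-- `‖S(w) - 1‖ ≤ K ‖w‖ (1-‖z‖)⁻¹` for `‖w‖ ≤ ‖z‖ < 1`. -/
lemma qS_sub_one_bound {q : ℝ} (hq₁ : 0 < q) (hq₂ : q < 1) (a : ℂ) {z w : ℂ}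
    (hz : ‖z‖ < 1) (hw : ‖w‖ ≤ ‖z‖) :
    ‖qS (q:ℂ) a w - 1‖ ≤ qK q a * (1 - ‖z‖)⁻¹ * ‖w‖ := by
  have hw1 : ‖w‖ < 1 := lt_of_le_of_lt hw hz
  have hsum := summable_qterm hq₁ hq₂ a hw1
  have hsumnorm := summable_norm_qterm hq₁ hq₂ a hw1
  have h0 : qS (q:ℂ) a w = 1 + ∑' n : ℕ, qp (q:ℂ) a (n+1) * w^(n+1) / qp (q:ℂ) (q:ℂ) (n+1) := by
    rw [qS, Summable.tsum_eq_zero_add hsum]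
    congr 1
    simp [qp_zero]
  rw [h0]
  have hg : Summable (fun n : ℕ => qK q a * ‖w‖^(n+1)) := by
    apply Summable.mul_left
    exact ((summable_geometric_of_lt_one (norm_nonneg w) hw1).comp_injective
      (add_left_injective 1))
  calc ‖1 + (∑' n : ℕ, qp (q:ℂ) a (n+1) * w^(n+1) / qp (q:ℂ) (q:ℂ) (n+1)) - 1‖
      = ‖∑' n : ℕ, qp (q:ℂ) a (n+1) * w^(n+1) / qp (q:ℂ) (q:ℂ) (n+1)‖ := by
        congr 1; ring
    _ ≤ ∑' n : ℕ, ‖qp (q:ℂ) a (n+1) * w^(n+1) / qp (q:ℂ) (q:ℂ) (n+1)‖ :=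
        norm_tsum_le_tsum_norm (hsumnorm.comp_injective (add_left_injective 1))
    _ ≤ ∑' n : ℕ, qK q a * ‖w‖^(n+1) := by
        apply Summable.tsum_le_tsum _ (hsumnorm.comp_injective (add_left_injective 1)) hg
        intro n
        exact norm_qterm_le hq₁ hq₂ a w (n+1)
    _ = qK q a * ‖w‖ * ∑' n : ℕ, ‖w‖^n := by
        rw [← tsum_mul_left]
        congr 1
        funext n
        rw [pow_succ']
        ring
    _ = qK q a * ‖w‖ * (1 - ‖w‖)⁻¹ := by rw [tsum_geometric_of_lt_one (norm_nonneg w) hw1]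
    _ ≤ qK q a * (1 - ‖z‖)⁻¹ * ‖w‖ := by
        rw [show qK q a * ‖w‖ * (1-‖w‖)⁻¹ = qK q a * (1-‖w‖)⁻¹ * ‖w‖ by ring]
        apply mul_le_mul_of_nonneg_right _ (norm_nonneg w)
        apply mul_le_mul_of_nonneg_left _ (qK_pos q a).le
        apply inv_anti₀ (by linarith) (by linarith)

lemma tendsto_qS_one {q : ℝ} (hq₁ : 0 < q) (hq₂ : q < 1) (a : ℂ) {z : ℂ} (hz : ‖z‖ < 1) :
    Tendsto (fun N : ℕ => qS (q:ℂ) a ((q:ℂ)^N * z)) atTop (nhds 1) := by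
  have key : Tendsto (fun N : ℕ => qS (q:ℂ) a ((q:ℂ)^N * z) - 1) atTop (nhds 0) := by
    apply squeeze_zero_norm (a := fun N => (qK q a * (1 - ‖z‖)⁻¹ * ‖z‖) * q^N)
    · intro N
      have hb : ‖(q:ℂ)^N * z‖ ≤ ‖z‖ := by
        rw [norm_mul, norm_pow, Complex.norm_real, Real.norm_eq_abs, abs_of_pos hq₁]
        calc q^N * ‖z‖ ≤ 1 * ‖z‖ := by
              apply mul_le_mul_of_nonneg_right _ (norm_nonneg z)
              exact pow_le_one₀ hq₁.le hq₂.le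
          _ = ‖z‖ := one_mul _
      calc ‖qS (q:ℂ) a ((q:ℂ)^N * z) - 1‖
          ≤ qK q a * (1 - ‖z‖)⁻¹ * ‖(q:ℂ)^N * z‖ := qS_sub_one_bound hq₁ hq₂ a hz hb
        _ = (qK q a * (1 - ‖z‖)⁻¹ * ‖z‖) * q^N := by
            rw [norm_mul, norm_pow, Complex.norm_real, Real.norm_eq_abs, abs_of_pos hq₁]
            ring
    · rw [show (0:ℝ) = (qK q a * (1 - ‖z‖)⁻¹ * ‖z‖) * 0 by ring]
      exact (tendsto_pow_atTop_nhds_zero_of_lt_one hq₁.le hq₂).const_mul _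
  have := key.add_const 1
  simpa using this

lemma one_sub_fac_ne {q : ℝ} (hq₁ : 0 < q) (hq₂ : q < 1) {w : ℂ} (hw : ‖w‖ < 1) (k : ℕ) :
    (1:ℂ) - w * (q:ℂ)^k ≠ 0 := by
  intro h
  have h1 : w * (q:ℂ) ^ k = 1 := by linear_combination -h
  have h2 : ‖w * (q:ℂ) ^ k‖ < 1 := by
    rw [norm_mul, norm_pow, Complex.norm_real, Real.norm_eq_abs, abs_of_pos hq₁]
    calc ‖w‖ * q ^ k ≤ ‖w‖ * 1 := by
          apply mul_le_mul_of_nonneg_left (pow_le_one₀ hq₁.le hq₂.le) (norm_nonneg w)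
      _ < 1 := by simpa using hw
  rw [h1] at h2; simp at h2

lemma summable_log {q : ℝ} (hq₁ : 0 < q) (hq₂ : q < 1) {w : ℂ} (hw : ‖w‖ < 1) :
    Summable (fun k : ℕ => Complex.log (1 - w * (q:ℂ)^k)) := by
  set M : ℝ := ‖w‖^2 * (1 - ‖w‖)⁻¹ / 2 + ‖w‖ with hM
  have hM0 : 0 ≤ M := by
    have : (0:ℝ) < 1 - ‖w‖ := by linarith
    positivity
  have hgeo : Summable (fun k : ℕ => M * q^k) :=
    (summable_geometric_of_lt_one hq₁.le hq₂).mul_left M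
  apply Summable.of_norm
  refine Summable.of_nonneg_of_le (fun k => norm_nonneg _) ?_ hgeo
  intro k
  have hnq : ‖-(w * (q:ℂ)^k)‖ = ‖w‖ * q^k := by
    rw [norm_neg, norm_mul, norm_pow, Complex.norm_real, Real.norm_eq_abs, abs_of_pos hq₁]
  have hqk1 : q^k ≤ 1 := pow_le_one₀ hq₁.le hq₂.le
  have hzlt : ‖-(w * (q:ℂ)^k)‖ < 1 := by
    rw [hnq]
    calc ‖w‖ * q^k ≤ ‖w‖ * 1 := mul_le_mul_of_nonneg_left hqk1 (norm_nonneg w)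
      _ < 1 := by simpa using hw
  have := Complex.norm_log_one_add_le hzlt
  rw [show (1 : ℂ) + -(w * (q:ℂ)^k) = 1 - w * (q:ℂ)^k by ring] at this
  rw [hnq] at this
  apply le_trans this
  have e1 : (‖w‖ * q^k)^2 ≤ ‖w‖^2 * q^k := by
    have h1 : (‖w‖ * q^k)^2 = ‖w‖^2 * (q^k * q^k) := by ring
    rw [h1]
    apply mul_le_mul_of_nonneg_left _ (by positivity)
    calc q^k * q^k ≤ 1 * q^k := by
          apply mul_le_mul_of_nonneg_right hqk1 (by positivity)
      _ = q^k := one_mul _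
  have e2 : (1 - ‖w‖ * q^k)⁻¹ ≤ (1 - ‖w‖)⁻¹ := by
    apply inv_anti₀
    · have : ‖w‖ * q^k ≤ ‖w‖ * 1 := mul_le_mul_of_nonneg_left hqk1 (norm_nonneg w)
      have hw1 : ‖w‖ < 1 := hw
      nlinarith
    · have : 0 ≤ ‖w‖ * q^k := by positivity
      nlinarith [mul_le_mul_of_nonneg_left hqk1 (norm_nonneg w)]
  calc (‖w‖ * q^k)^2 * (1 - ‖w‖ * q^k)⁻¹ / 2 + ‖w‖ * q^k
      ≤ (‖w‖^2 * q^k) * (1 - ‖w‖)⁻¹ / 2 + ‖w‖ * q^k := by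
        apply add_le_add_left
        apply div_le_div_of_nonneg_right _ (by norm_num)
        apply mul_le_mul e1 e2 _ (by positivity)
        · have h3 : 0 < 1 - ‖w‖ * q^k := by
            nlinarith [mul_le_mul_of_nonneg_left hqk1 (norm_nonneg w)]
          positivity
    _ = M * q^k := by rw [hM]; ring

lemma multipliable_fac {q : ℝ} (hq₁ : 0 < q) (hq₂ : q < 1) {w : ℂ} (hw : ‖w‖ < 1) :
    Multipliable (fun k : ℕ => 1 - w * (q:ℂ)^k) := by
  exact Complex.multipliable_of_summable_log (summable_log hq₁ hq₂ hw)

lemma tendsto_qp_qpi {q : ℝ} (hq₁ : 0 < q) (hq₂ : q < 1) {w : ℂ} (hw : ‖w‖ < 1) :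
    Tendsto (fun N : ℕ => qp (q:ℂ) w N) atTop (nhds (qpi (q:ℂ) w)) :=
  (multipliable_fac hq₁ hq₂ hw).hasProd.tendsto_prod_nat

lemma qpi_ne_zero {q : ℝ} (hq₁ : 0 < q) (hq₂ : q < 1) {w : ℂ} (hw : ‖w‖ < 1) :
    qpi (q:ℂ) w ≠ 0 := by
  have := Complex.cexp_tsum_eq_tprod (f := fun k => 1 - w * (q:ℂ)^k)
    (fun k => one_sub_fac_ne hq₁ hq₂ hw k) (summable_log hq₁ hq₂ hw)
  have h2 := this
  rw [qpi, ← h2]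
  exact Complex.exp_ne_zero _

/-- The `q`-binomial theorem. -/
lemma qS_eq {q : ℝ} (hq₁ : 0 < q) (hq₂ : q < 1) (a : ℂ) {z : ℂ} (hz : ‖z‖ < 1)
    (haz : ‖a * z‖ < 1) :
    qS (q:ℂ) a z = qpi (q:ℂ) (a*z) / qpi (q:ℂ) z := by
  have t1 : Tendsto (fun N : ℕ => qS (q:ℂ) a z * qp (q:ℂ) z N) atTop
      (nhds (qS (q:ℂ) a z * qpi (q:ℂ) z)) := (tendsto_qp_qpi hq₁ hq₂ hz).const_mul _
  have t2 : Tendsto (fun N : ℕ => qp (q:ℂ) (a*z) N * qS (q:ℂ) a ((q:ℂ)^N * z)) atTop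
      (nhds (qpi (q:ℂ) (a*z) * 1)) :=
    (tendsto_qp_qpi hq₁ hq₂ haz).mul (tendsto_qS_one hq₁ hq₂ a hz)
  have heq : (fun N : ℕ => qS (q:ℂ) a z * qp (q:ℂ) z N)
      = fun N : ℕ => qp (q:ℂ) (a*z) N * qS (q:ℂ) a ((q:ℂ)^N * z) := by
    funext N
    exact qS_iterate hq₁ hq₂ a hz N
  rw [heq] at t1
  have := tendsto_nhds_unique t1 t2
  rw [mul_one] at this
  rw [eq_div_iff (qpi_ne_zero hq₁ hq₂ hz)]
  exact this

lemma qbinom {q : ℝ} (hq₁ : 0 < q) (hq₂ : q < 1) (a : ℂ) {z : ℂ} (hz : ‖z‖ < 1)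
    (haz : ‖a * z‖ < 1) :
    HasSum (fun n => qp (q:ℂ) a n * z^n / qp (q:ℂ) (q:ℂ) n)
      (qpi (q:ℂ) (a*z) / qpi (q:ℂ) z) := by
  have := hasSum_qS hq₁ hq₂ a hz
  rwa [qS_eq hq₁ hq₂ a hz haz] at this

end ASCAux

open ASCAux

/-- The generating function (2.15) for the Al-Salam--Chihara polynomials. -/
theorem stmt5 (q t₁ t₂ : ℝ) (hq₁ : 0 < q) (hq₂ : q < 1)
    (ht₁ : t₁ ∈ Set.Ioo (-1 : ℝ) 1) (ht₂ : t₂ ∈ Set.Ioo (-1 : ℝ) 1)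
    (ht₁0 : t₁ ≠ 0) (θ : ℝ) (t : ℂ) (ht : ‖t‖ < 1) :
    HasSum
      (fun n : ℕ =>
        qp q (t₁ * t₂) n * ascP q t₁ t₂ n θ * (t / t₁) ^ n / qp q q n)
      ((qpi q (t * t₁) * qpi q (t * t₂)) /
        (qpi q (t * Complex.exp (θ * Complex.I)) *
          qpi q (t * Complex.exp (-(θ * Complex.I))))) := by
  set u : ℂ := Complex.exp (θ * Complex.I) with hu_def
  have hu : u ≠ 0 := Complex.exp_ne_zero _
  have hexp : Complex.exp (-(θ * Complex.I)) = u⁻¹ := by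
    rw [hu_def, ← Complex.exp_neg]
  have hnu : ‖u‖ = 1 := by
    rw [hu_def]
    exact Complex.norm_exp_ofReal_mul_I θ
  have hnuinv : ‖u⁻¹‖ = 1 := by rw [norm_inv, hnu]; norm_num
  have ht₁c : (t₁:ℂ) ≠ 0 := by exact_mod_cast ht₁0
  have hnt₁ : ‖(t₁:ℂ)‖ < 1 := by
    rw [Complex.norm_real, Real.norm_eq_abs, abs_lt]
    exact ⟨ht₁.1, ht₁.2⟩
  have hnt₂ : ‖(t₂:ℂ)‖ < 1 := by
    rw [Complex.norm_real, Real.norm_eq_abs, abs_lt]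
    exact ⟨ht₂.1, ht₂.2⟩
  have hntu : ‖t * u‖ < 1 := by rw [norm_mul, hnu, mul_one]; exact ht
  have hntuinv : ‖t * u⁻¹‖ < 1 := by rw [norm_mul, hnuinv, mul_one]; exact ht
  have hntt₁ : ‖t * (t₁:ℂ)‖ < 1 := by
    rw [norm_mul]
    calc ‖t‖ * ‖(t₁:ℂ)‖ ≤ 1 * ‖(t₁:ℂ)‖ := by
          apply mul_le_mul_of_nonneg_right ht.le (norm_nonneg _)
      _ < 1 := by simpa using hnt₁
  have hntt₂ : ‖t * (t₂:ℂ)‖ < 1 := by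
    rw [norm_mul]
    calc ‖t‖ * ‖(t₂:ℂ)‖ ≤ 1 * ‖(t₂:ℂ)‖ := by
          apply mul_le_mul_of_nonneg_right ht.le (norm_nonneg _)
      _ < 1 := by simpa using hnt₂
  -- the two q-binomial series
  have e1 : ((t₁:ℂ) * u⁻¹) * (t * u) = t * (t₁:ℂ) := by field_simp
  have e2 : ((t₂:ℂ) * u) * (t * u⁻¹) = t * (t₂:ℂ) := by field_simp
  have hf : HasSum (fun j => qp (q:ℂ) ((t₁:ℂ) * u⁻¹) j * (t*u)^j / qp (q:ℂ) (q:ℂ) j)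
      (qpi (q:ℂ) (t * (t₁:ℂ)) / qpi (q:ℂ) (t * u)) := by
    have := qbinom hq₁ hq₂ ((t₁:ℂ) * u⁻¹) hntu (by rw [e1]; exact hntt₁)
    rwa [e1] at this
  have hg : HasSum (fun m => qp (q:ℂ) ((t₂:ℂ) * u) m * (t*u⁻¹)^m / qp (q:ℂ) (q:ℂ) m)
      (qpi (q:ℂ) (t * (t₂:ℂ)) / qpi (q:ℂ) (t * u⁻¹)) := by
    have := qbinom hq₁ hq₂ ((t₂:ℂ) * u) hntuinv (by rw [e2]; exact hntt₂)
    rwa [e2] at this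
  have hfn : Summable (fun j => ‖qp (q:ℂ) ((t₁:ℂ) * u⁻¹) j * (t*u)^j / qp (q:ℂ) (q:ℂ) j‖) :=
    summable_norm_qterm hq₁ hq₂ _ hntu
  have hgn : Summable (fun m => ‖qp (q:ℂ) ((t₂:ℂ) * u) m * (t*u⁻¹)^m / qp (q:ℂ) (q:ℂ) m‖) :=
    summable_norm_qterm hq₁ hq₂ _ hntuinv
  -- Cauchy product
  set f : ℕ → ℂ := fun j => qp (q:ℂ) ((t₁:ℂ) * u⁻¹) j * (t*u)^j / qp (q:ℂ) (q:ℂ) j with hf_def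
  set g : ℕ → ℂ := fun m => qp (q:ℂ) ((t₂:ℂ) * u) m * (t*u⁻¹)^m / qp (q:ℂ) (q:ℂ) m with hg_def
  have hFsummable : Summable (fun n => ∑ kl ∈ Finset.HasAntidiagonal.antidiagonal n, f kl.1 * g kl.2) :=
    (summable_norm_sum_mul_antidiagonal_of_summable_norm hfn hgn).of_norm
  have hprod : ((∑' n, f n) * ∑' n, g n) = ∑' n, ∑ kl ∈ Finset.HasAntidiagonal.antidiagonal n, f kl.1 * g kl.2 :=
    tsum_mul_tsum_eq_tsum_sum_antidiagonal_of_summable_norm hfn hgn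
  have hFsum : HasSum (fun n => ∑ kl ∈ Finset.HasAntidiagonal.antidiagonal n, f kl.1 * g kl.2)
      ((qpi (q:ℂ) (t * (t₁:ℂ)) / qpi (q:ℂ) (t * u))
        * (qpi (q:ℂ) (t * (t₂:ℂ)) / qpi (q:ℂ) (t * u⁻¹))) := by
    have h1 := hFsummable.hasSum
    rw [← hprod, hf.tsum_eq, hg.tsum_eq] at h1
    exact h1
  -- identify the coefficients
  have hcoeff : ∀ n : ℕ, (∑ kl ∈ Finset.HasAntidiagonal.antidiagonal n, f kl.1 * g kl.2)
      = qp (q:ℂ) ((t₁:ℂ) * (t₂:ℂ)) n * ascP (q:ℂ) (t₁:ℂ) (t₂:ℂ) n θ * (t / (t₁:ℂ)) ^ n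
        / qp (q:ℂ) (q:ℂ) n := by
    intro n
    rw [Finset.Nat.sum_antidiagonal_eq_sum_range_succ_mk]
    have step1 : ∑ k ∈ Finset.range (n+1), f k * g (n - k)
        = t^n * Lfun (q:ℂ) u (t₁:ℂ) n (t₂:ℂ) := by
      rw [Lfun, Finset.mul_sum]
      apply Finset.sum_congr rfl
      intro k hk
      have hkn : k ≤ n := by simpa [Nat.lt_succ_iff] using hk
      simp only [hf_def, hg_def]
      have htn : t^k * t^(n-k) = t^n := by
        rw [← pow_add]
        congr 1
        omega
      rw [mul_pow, mul_pow, div_mul_div_comm, ← mul_div_assoc]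
      congr 1
      linear_combination (qp (q:ℂ) ((t₁:ℂ) * u⁻¹) k * qp (q:ℂ) ((t₂:ℂ) * u) (n-k)
        * u^k * (u⁻¹)^(n-k)) * htn
    rw [step1, crux hq₁ hq₂ hu ht₁c n (t₂:ℂ)]
    -- step3 : t^n * Rfun = target
    rw [Rfun, Rsum, ascP]
    have hqn : qp (q:ℂ) (q:ℂ) n ≠ 0 := qq_ne_zero hq₁ hq₂ n
    have hnt₁t₂ : ‖(t₁:ℂ) * (t₂:ℂ)‖ < 1 := by
      rw [norm_mul]
      calc ‖(t₁:ℂ)‖ * ‖(t₂:ℂ)‖ ≤ 1 * ‖(t₂:ℂ)‖ :=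
            mul_le_mul_of_nonneg_right hnt₁.le (norm_nonneg _)
        _ < 1 := by simpa using hnt₂
    rw [hexp, ← hu_def]
    rw [Finset.sum_div, Finset.mul_sum, Finset.mul_sum, Finset.sum_mul, Finset.sum_div]
    apply Finset.sum_congr rfl
    intro k hk
    have hkn : k ≤ n := by simpa [Nat.lt_succ_iff] using hk
    have h1 : qp (q:ℂ) (q:ℂ) k ≠ 0 := qq_ne_zero hq₁ hq₂ k
    have h3 : qp (q:ℂ) ((t₁:ℂ) * (t₂:ℂ)) k ≠ 0 := qp_ne_zero hq₁ hq₂ hnt₁t₂ k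
    have hsplit : qp (q:ℂ) ((t₁:ℂ) * (t₂:ℂ)) n
        = qp (q:ℂ) ((t₁:ℂ) * (t₂:ℂ)) k * qp (q:ℂ) ((t₁:ℂ) * (t₂:ℂ) * (q:ℂ)^k) (n - k) := by
      rw [← qp_add]
      congr 1
      omega
    rw [hsplit, div_pow]
    field_simp
  have := hFsum.congr_fun fun n => (hcoeff n).symm
  -- match the right-hand side
  have hval : (qpi (q:ℂ) (t * (t₁:ℂ)) / qpi (q:ℂ) (t * u))
      * (qpi (q:ℂ) (t * (t₂:ℂ)) / qpi (q:ℂ) (t * u⁻¹))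
      = (qpi (q:ℂ) (t * (t₁:ℂ)) * qpi (q:ℂ) (t * (t₂:ℂ)))
        / (qpi (q:ℂ) (t * u) * qpi (q:ℂ) (t * u⁻¹)) := div_mul_div_comm _ _ _ _
  rw [hval] at this
  rw [hexp]
  exact this
end
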